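/- arXiv:0812.4835 — 7 statements merged into one kernel-verified Lean document; each statement's English description precedes it below -/
import Mathlib

section
/- Under the Protocol 2 model: if an attack (U_1,…,U_{N+1}) satisfies the no-error conditions (T) and (Z), then there exists a family of unit vectors F : (Fin N → Bool) → EuclideanSpace ℂ (Fin d) such that for every bitstring i and every m : Finset (Fin N), the final state Ψ_m(δ_i) equals the elementary tensor F i ⊗ δ_i ⊗ δ_{i∧m}; concretely, its coefficient at basis index (a,j,b) equals (F i) a when j = i and b = i∧m, and equals 0 otherwise. -/
/-!
Protocol 2 model (semi-quantum key distribution, measure-resend):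
see Boyer, Gelles, Kenigsberg, Mor, "Semi-Quantum Key Distribution".
-/

namespace SQKD2

/-- Bitstrings of length `N`. -/
abbrev Bits (N : ℕ) := Fin N → Bool

/-- Index type of the global state space: Eve's probe, the `N` travelling qubits,
Bob's register. -/
abbrev Idx (N d : ℕ) := Fin d × Bits N × Bits N

/-- The global state space. -/
abbrev H (N d : ℕ) := EuclideanSpace ℂ (Idx N d)

/-- The mask `i ∧ m`. -/
def mask {N : ℕ} (i : Bits N) (m : Finset (Fin N)) : Bits N :=
  fun k => if k ∈ m then i k else false

/-- The underlying function of Bob's measure-resend permutation `M_k` on basis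
indices: `(a, j, b) ↦ (a, j, b')` where `b'` agrees with `b` except
`b' k = b k XOR j k`. -/
def mPermFun {N d : ℕ} (k : Fin N) : Idx N d → Idx N d :=
  fun p => (p.1, p.2.1, Function.update p.2.2 k (xor (p.2.2 k) (p.2.1 k)))

lemma mPermFun_involutive {N d : ℕ} (k : Fin N) :
    Function.Involutive (mPermFun (N := N) (d := d) k) := by
  rintro ⟨a, j, b⟩
  simp only [mPermFun]
  refine Prod.ext rfl (Prod.ext rfl ?_)
  funext l
  by_cases hl : l = k
  · subst hl
    simp [Bool.xor_assoc]
  · simp [Function.update_of_ne hl]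

/-- Bob's measure-resend permutation of basis indices, as an equivalence. -/
def mPerm {N d : ℕ} (k : Fin N) : Idx N d ≃ Idx N d :=
  (mPermFun_involutive (N := N) (d := d) k).toPerm _

/-- Bob's measure-resend unitary `M_k`. -/
noncomputable def M {N d : ℕ} (k : Fin N) : H N d ≃ₗᵢ[ℂ] H N d :=
  LinearIsometryEquiv.piLpCongrLeft 2 ℂ ℂ (mPerm (N := N) (d := d) k)

/-- A unitary of the global space acts only on the first two factors (Eve's
probe and the travelling qubits) if its matrix elements in the standard basis
are of the form `c((a',j'),(a,j))` when `b' = b` and vanish otherwise. -/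
def ActsOnFirstTwo {N d : ℕ} (V : H N d ≃ₗᵢ[ℂ] H N d) : Prop :=
  ∃ c : (Fin d × Bits N) → (Fin d × Bits N) → ℂ,
    ∀ (a : Fin d) (j b : Bits N) (a' : Fin d) (j' b' : Bits N),
      V (EuclideanSpace.single (a, j, b) 1) (a', j', b') =
        if b' = b then c (a', j') (a, j) else 0

/-- `W_m = U_{N+1} ∘ A_N ∘ U_N ∘ ⋯ ∘ A_1 ∘ U_1`, where `A_k = M_k` if `k ∈ m`
and the identity otherwise.  Here `U t` for `t : Fin (N+1)` is `U_{t+1}`. -/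
noncomputable def W {N d : ℕ} (U : Fin (N + 1) → (H N d ≃ₗᵢ[ℂ] H N d)) (m : Finset (Fin N)) :
    H N d ≃ₗᵢ[ℂ] H N d :=
  ((List.finRange N).foldl
    (fun acc k => (acc.trans (U k.castSucc)).trans
      (if k ∈ m then M k else LinearIsometryEquiv.refl ℂ (H N d)))
    (LinearIsometryEquiv.refl ℂ (H N d))).trans (U (Fin.last N))

/-- The initial state `ε₀ ⊗ φ ⊗ δ_0` for Alice's input `φ`. -/
noncomputable def init {N d : ℕ} (hd : 0 < d) (φ : EuclideanSpace ℂ (Bits N)) : H N d :=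
  WithLp.toLp 2 (fun p : Idx N d => if p.1 = (⟨0, hd⟩ : Fin d) ∧ p.2.2 = (fun _ => false) then φ p.2.1 else 0)

/-- The final state `Ψ_m(φ) = W_m (ε₀ ⊗ φ ⊗ δ_0)`. -/
noncomputable def Psi {N d : ℕ} (U : Fin (N + 1) → (H N d ≃ₗᵢ[ℂ] H N d)) (hd : 0 < d)
    (m : Finset (Fin N)) (φ : EuclideanSpace ℂ (Bits N)) : H N d :=
  W U m (init hd φ)

/-- Condition (T): no error on TEST bits. -/
def CondT {N d : ℕ} (U : Fin (N + 1) → (H N d ≃ₗᵢ[ℂ] H N d)) (hd : 0 < d) : Prop :=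
  ∀ (i : Bits N) (m : Finset (Fin N)) (a : Fin d) (j b : Bits N),
    b ≠ mask i m → Psi U hd m (EuclideanSpace.single i 1) (a, j, b) = 0

/-- Condition (Z): no error on Z-CTRL bits. -/
def CondZ {N d : ℕ} (U : Fin (N + 1) → (H N d ≃ₗᵢ[ℂ] H N d)) (hd : 0 < d) : Prop :=
  ∀ (i : Bits N) (m : Finset (Fin N)) (a : Fin d) (j b : Bits N),
    j ≠ i → Psi U hd m (EuclideanSpace.single i 1) (a, j, b) = 0

/-- Condition (X): no error on X-CTRL bits. -/
def CondX {N d : ℕ} (U : Fin (N + 1) → (H N d ≃ₗᵢ[ℂ] H N d)) (hd : 0 < d) : Prop :=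
  ∀ (m : Finset (Fin N)) (k : Fin N), k ∉ m →
    ∀ i : Bits N, i k = false →
      ∀ (a : Fin d) (j b : Bits N),
        Psi U hd m (((Real.sqrt 2 : ℂ))⁻¹ •
            (EuclideanSpace.single i 1 +
              EuclideanSpace.single (Function.update i k true) 1)) (a, j, b) =
          Psi U hd m (((Real.sqrt 2 : ℂ))⁻¹ •
            (EuclideanSpace.single i 1 +
              EuclideanSpace.single (Function.update i k true) 1))
            (a, Function.update j k (!(j k)), b)

section Aux
variable {N d : ℕ}

lemma M_apply (k : Fin N) (x : H N d) (p : Idx N d) : M k x p = x (mPermFun k p) := rfl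

def bflip (k : Fin N) (b : Bits N) : Bits N := Function.update b k (!(b k))

lemma bflip_bflip (k : Fin N) (b : Bits N) : bflip k (bflip k b) = b := by
  funext l
  by_cases hl : l = k
  · subst hl; simp [bflip]
  · simp [bflip, Function.update_of_ne hl]

lemma bflip_self (k : Fin N) (b : Bits N) : bflip k b k = !(b k) := by simp [bflip]

lemma bflip_ne (k : Fin N) {l : Fin N} (b : Bits N) (h : l ≠ k) : bflip k b l = b l := by
  simp [bflip, Function.update_of_ne h]

def flipOp (k : Fin N) (x : H N d) : H N d :=
  WithLp.toLp 2 (fun p : Idx N d => x (p.1, p.2.1, bflip k p.2.2))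

lemma flipOp_flipOp (k : Fin N) (x : H N d) : flipOp k (flipOp k x) = x :=
  PiLp.ext fun p => by
    obtain ⟨a, j, b⟩ := p
    show x (a, j, bflip k (bflip k b)) = x (a, j, b)
    rw [bflip_bflip]

/-- supported on `b k = false`. -/
def SuppF (k : Fin N) (x : H N d) : Prop :=
  ∀ (a : Fin d) (j b : Bits N), b k = true → x (a, j, b) = 0

lemma expand_apply (V : H N d ≃ₗᵢ[ℂ] H N d) (x : H N d) (q : Idx N d) :
    V x q = ∑ p : Idx N d, x p * V (EuclideanSpace.single p 1) q := by
  conv_lhs => rw [show x = ∑ p : Idx N d, x p • EuclideanSpace.single p 1 by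
    ext q; rw [WithLp.ofLp_sum, Finset.sum_apply]; simp [EuclideanSpace.single_apply]]
  rw [map_sum, WithLp.ofLp_sum, Finset.sum_apply]
  simp

lemma U_supp {V : H N d ≃ₗᵢ[ℂ] H N d} (hV : ActsOnFirstTwo V) {k : Fin N} {x : H N d}
    (hx : SuppF k x) : SuppF k (V x) := by
  obtain ⟨c, hc⟩ := hV
  intro a' j' b' hb'
  rw [expand_apply]
  refine Finset.sum_eq_zero ?_
  rintro ⟨a, j, b⟩ -
  rw [hc]
  by_cases hbb : b' = b
  · rw [hx a j b (hbb ▸ hb'), zero_mul]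
  · rw [if_neg hbb, mul_zero]

lemma M_supp {l k : Fin N} (h : l ≠ k) {x : H N d} (hx : SuppF k x) : SuppF k (M l x) := by
  intro a j b hb
  rw [M_apply]
  exact hx a j _ (by simpa [mPermFun, Function.update_of_ne (Ne.symm h)] using hb)

lemma flipOp_supp_eval {k : Fin N} {x : H N d} (hx : SuppF k x)
    (a : Fin d) (j b : Bits N) (hb : b k = false) : flipOp k x (a, j, b) = 0 := by
  exact hx a j (bflip k b) (by simp [bflip_self, hb])

lemma U_comm_flip {V : H N d ≃ₗᵢ[ℂ] H N d} (hV : ActsOnFirstTwo V) (k : Fin N) (x : H N d) :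
    V (flipOp k x) = flipOp k (V x) := by
  obtain ⟨c, hc⟩ := hV
  ext p
  obtain ⟨a', j', b'⟩ := p
  show V (flipOp k x) (a', j', b') = V x (a', j', bflip k b')
  rw [expand_apply, expand_apply]
  refine Fintype.sum_bijective (fun p : Idx N d => (p.1, p.2.1, bflip k p.2.2))
    ⟨fun p q hpq => ?_, fun p => ⟨(p.1, p.2.1, bflip k p.2.2), by simp [bflip_bflip]⟩⟩ _ _ ?_
  · obtain ⟨a, j, b⟩ := p; obtain ⟨a2, j2, b2⟩ := q
    simp only [Prod.mk.injEq] at hpq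
    exact Prod.ext hpq.1 (Prod.ext hpq.2.1 (by
      have := congrArg (bflip k) hpq.2.2
      rwa [bflip_bflip, bflip_bflip] at this))
  · rintro ⟨a, j, b⟩
    show flipOp k x (a, j, b) * _ = x (a, j, bflip k b) * _
    rw [show flipOp k x (a, j, b) = x (a, j, bflip k b) from rfl]
    congr 1
    rw [hc, hc]
    congr 1
    simp only [eq_iff_iff]
    constructor
    · rintro rfl; rfl
    · intro h
      have := congrArg (bflip k) h
      rwa [bflip_bflip, bflip_bflip] at this

lemma mPermFun_bflip {l k : Fin N} (h : l ≠ k) (p : Idx N d) :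
    mPermFun l (p.1, p.2.1, bflip k p.2.2) =
      ((mPermFun l p).1, (mPermFun l p).2.1, bflip k (mPermFun l p).2.2) := by
  obtain ⟨a, j, b⟩ := p
  simp only [mPermFun]
  refine Prod.ext rfl (Prod.ext rfl ?_)
  funext t
  dsimp only
  by_cases htl : t = l
  · subst htl
    simp [bflip_ne _ _ h]
  · rw [Function.update_of_ne htl]
    by_cases htk : t = k
    · subst htk
      rw [bflip_self, bflip_self, Function.update_of_ne htl]
    · rw [bflip_ne _ _ htk, bflip_ne _ _ htk, Function.update_of_ne htl]

lemma M_comm_flip {l k : Fin N} (h : l ≠ k) (x : H N d) :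
    M l (flipOp k x) = flipOp k (M l x) := by
  ext p
  rw [M_apply]
  show flipOp k x (mPermFun l p) = M l x (p.1, p.2.1, bflip k p.2.2)
  rw [M_apply, show flipOp k x (mPermFun l p) =
    x ((mPermFun l p).1, (mPermFun l p).2.1, bflip k (mPermFun l p).2.2) from rfl,
    ← mPermFun_bflip h]

end Aux


section Fold
variable {N d : ℕ}

/-- The step function of the fold defining `W`. -/
noncomputable def stepF (U : Fin (N + 1) → (H N d ≃ₗᵢ[ℂ] H N d)) (m : Finset (Fin N)) :
    (H N d ≃ₗᵢ[ℂ] H N d) → Fin N → (H N d ≃ₗᵢ[ℂ] H N d) :=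
  fun acc k => (acc.trans (U k.castSucc)).trans
      (if k ∈ m then M k else LinearIsometryEquiv.refl ℂ (H N d))

noncomputable def evalS (U : Fin (N + 1) → (H N d ≃ₗᵢ[ℂ] H N d)) (m : Finset (Fin N))
    (l : List (Fin N)) : H N d ≃ₗᵢ[ℂ] H N d :=
  List.foldl (stepF U m) (LinearIsometryEquiv.refl ℂ (H N d)) l

lemma foldl_apply (U : Fin (N + 1) → (H N d ≃ₗᵢ[ℂ] H N d)) (m : Finset (Fin N))
    (l : List (Fin N)) (e : H N d ≃ₗᵢ[ℂ] H N d) (x : H N d) :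
    (List.foldl (stepF U m) e l) x = evalS U m l (e x) := by
  induction l generalizing e x with
  | nil => rfl
  | cons a l ih =>
      rw [List.foldl_cons, ih]
      conv_rhs => rw [evalS, List.foldl_cons, ih]
      rfl

lemma W_apply (U : Fin (N + 1) → (H N d ≃ₗᵢ[ℂ] H N d)) (m : Finset (Fin N)) (x : H N d) :
    W U m x = U (Fin.last N) (evalS U m (List.finRange N) x) := rfl

lemma evalS_nil (U : Fin (N + 1) → (H N d ≃ₗᵢ[ℂ] H N d)) (m : Finset (Fin N)) (x : H N d) :
    evalS U m [] x = x := rfl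

lemma evalS_cons (U : Fin (N + 1) → (H N d ≃ₗᵢ[ℂ] H N d)) (m : Finset (Fin N))
    (a : Fin N) (l : List (Fin N)) (x : H N d) :
    evalS U m (a :: l) x =
      evalS U m l ((if a ∈ m then M a else LinearIsometryEquiv.refl ℂ (H N d))
        (U a.castSucc x)) := by
  rw [evalS, List.foldl_cons, foldl_apply]
  rfl

lemma evalS_append (U : Fin (N + 1) → (H N d ≃ₗᵢ[ℂ] H N d)) (m : Finset (Fin N))
    (l₁ l₂ : List (Fin N)) (x : H N d) :
    evalS U m (l₁ ++ l₂) x = evalS U m l₂ (evalS U m l₁ x) := by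
  rw [evalS, List.foldl_append, foldl_apply, foldl_apply]
  rfl

lemma evalS_congr (U : Fin (N + 1) → (H N d ≃ₗᵢ[ℂ] H N d)) (m : Finset (Fin N))
    (k : Fin N) (l : List (Fin N)) (hkl : k ∉ l) (x : H N d) :
    evalS U (insert k m) l x = evalS U m l x := by
  induction l generalizing x with
  | nil => rfl
  | cons a l ih =>
      have hak : a ≠ k := fun h => hkl (h ▸ List.mem_cons_self)
      rw [evalS_cons, evalS_cons, ih (fun h => hkl (List.mem_cons_of_mem a h))]
      have : (if a ∈ insert k m then M a else LinearIsometryEquiv.refl ℂ (H N d)) =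
          (if a ∈ m then M a else LinearIsometryEquiv.refl ℂ (H N d)) := by
        by_cases ham : a ∈ m <;> simp [Finset.mem_insert, ham, hak]
      rw [this]

lemma evalS_supp (U : Fin (N + 1) → (H N d ≃ₗᵢ[ℂ] H N d))
    (hU : ∀ t, ActsOnFirstTwo (U t)) (m : Finset (Fin N))
    (k : Fin N) (l : List (Fin N)) (hkl : k ∉ l) {x : H N d} (hx : SuppF k x) :
    SuppF k (evalS U m l x) := by
  induction l generalizing x with
  | nil => exact hx
  | cons a l ih =>
      have hak : a ≠ k := fun h => hkl (h ▸ List.mem_cons_self)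
      rw [evalS_cons]
      refine ih (fun h => hkl (List.mem_cons_of_mem a h)) ?_
      have h1 : SuppF k (U a.castSucc x) := U_supp (hU _) hx
      by_cases ham : a ∈ m
      · rw [if_pos ham]; exact M_supp hak h1
      · rw [if_neg ham]; exact h1

lemma evalS_comm_flip (U : Fin (N + 1) → (H N d ≃ₗᵢ[ℂ] H N d))
    (hU : ∀ t, ActsOnFirstTwo (U t)) (m : Finset (Fin N))
    (k : Fin N) (l : List (Fin N)) (hkl : k ∉ l) (x : H N d) :
    evalS U m l (flipOp k x) = flipOp k (evalS U m l x) := by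
  induction l generalizing x with
  | nil => rfl
  | cons a l ih =>
      have hak : a ≠ k := fun h => hkl (h ▸ List.mem_cons_self)
      rw [evalS_cons, evalS_cons, U_comm_flip (hU _)]
      rw [show (if a ∈ m then M a else LinearIsometryEquiv.refl ℂ (H N d))
            (flipOp k (U a.castSucc x)) =
          flipOp k ((if a ∈ m then M a else LinearIsometryEquiv.refl ℂ (H N d))
            (U a.castSucc x)) by
        by_cases ham : a ∈ m
        · rw [if_pos ham, M_comm_flip hak]
        · rw [if_neg ham]; rfl]
      exact ih (fun h => hkl (List.mem_cons_of_mem a h)) _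

end Fold

section Main
variable {N d : ℕ}

lemma init_single (hd : 0 < d) (i : Bits N) :
    init (N := N) hd (EuclideanSpace.single i 1) =
      EuclideanSpace.single (((⟨0, hd⟩ : Fin d), i, fun _ => false) : Idx N d) 1 := by
  ext p
  obtain ⟨a, j, b⟩ := p
  show (if a = (⟨0, hd⟩ : Fin d) ∧ b = (fun _ => false) then EuclideanSpace.single i (1 : ℂ) j else 0)
      = _
  rw [EuclideanSpace.single_apply, EuclideanSpace.single_apply]
  by_cases h1 : a = (⟨0, hd⟩ : Fin d) <;> by_cases h2 : b = (fun _ => false) <;>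
    by_cases h3 : j = i <;> simp [h1, h2, h3, Prod.ext_iff]

lemma init_suppF (hd : 0 < d) (i : Bits N) (k : Fin N) :
    SuppF k (init (N := N) (d := d) hd (EuclideanSpace.single i 1)) := by
  intro a j b hb
  show (if a = (⟨0, hd⟩ : Fin d) ∧ b = (fun _ => false) then EuclideanSpace.single i (1 : ℂ) j else 0)
      = 0
  rw [if_neg]
  rintro ⟨-, h2⟩
  rw [h2] at hb
  exact Bool.false_ne_true hb

lemma flipOp_zero (k : Fin N) : flipOp (d := d) k 0 = 0 := by
  ext p; rfl

lemma psi_insert (U : Fin (N + 1) → (H N d ≃ₗᵢ[ℂ] H N d)) (hU : ∀ t, ActsOnFirstTwo (U t))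
    (hd : 0 < d) (hT : CondT U hd) (i : Bits N) (m : Finset (Fin N)) (k : Fin N) (hk : k ∉ m)
    (a : Fin d) (j b : Bits N) :
    Psi U hd (insert k m) (EuclideanSpace.single i 1) (a, j, b) =
      Psi U hd m (EuclideanSpace.single i 1) (a, j, if i k then bflip k b else b) := by
  classical
  set l₁ := (List.finRange N).take k.val with hl₁
  set l₂ := (List.finRange N).drop (k.val + 1) with hl₂
  have hlt : (k : ℕ) < (List.finRange N).length := by
    rw [List.length_finRange]; exact k.isLt
  have hsplit : List.finRange N = l₁ ++ k :: l₂ := by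
    conv_lhs => rw [← List.take_append_drop k.val (List.finRange N)]
    rw [List.drop_eq_getElem_cons hlt]
    congr 2
    rw [List.getElem_finRange]
    exact Fin.ext rfl
  have hnd := List.nodup_finRange N
  rw [hsplit, List.nodup_append'] at hnd
  obtain ⟨-, hnd2, hdisj⟩ := hnd
  have hk2 : k ∉ l₂ := (List.nodup_cons.mp hnd2).1
  have hk1 : k ∉ l₁ := fun h => hdisj h List.mem_cons_self
  set x0 := init hd (EuclideanSpace.single i 1) with hx0
  set φ : H N d := U k.castSucc (evalS U m l₁ x0) with hφdef
  set φ₀ : H N d := WithLp.toLp 2 (fun p : Idx N d => if p.2.1 k = false then φ p else 0) with hφ₀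
  set φ₁ : H N d := WithLp.toLp 2 (fun p : Idx N d => if p.2.1 k = true then φ p else 0) with hφ₁
  have hφadd : φ = φ₀ + φ₁ := by
    ext p
    rw [PiLp.add_apply, hφ₀, hφ₁]
    cases h : p.2.1 k <;> simp [h]
  have hMφ : M k φ = φ₀ + flipOp k φ₁ := by
    ext p
    obtain ⟨a', j', b'⟩ := p
    rw [PiLp.add_apply, M_apply]
    show φ (a', j', Function.update b' k (xor (b' k) (j' k))) = φ₀ (a', j', b')
      + φ₁ (a', j', bflip k b')
    cases hjk : j' k
    · have hupd : Function.update b' k (xor (b' k) false) = b' := by simp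
      rw [hupd, hφ₀, hφ₁]
      simp [hjk]
    · have hupd : Function.update b' k (xor (b' k) true) = bflip k b' := by
        rw [Bool.xor_true]; rfl
      rw [hupd, hφ₀, hφ₁]
      simp [hjk]
  have hPsim : Psi U hd m (EuclideanSpace.single i 1) =
      U (Fin.last N) (evalS U m l₂ φ₀) + U (Fin.last N) (evalS U m l₂ φ₁) := by
    rw [Psi, W_apply, hsplit, evalS_append, evalS_cons, if_neg hk]
    rw [show (LinearIsometryEquiv.refl ℂ (H N d)) ((U k.castSucc) (evalS U m l₁ x0)) = φ
      from rfl]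
    rw [hφadd, map_add, map_add]
  have hPsim' : Psi U hd (insert k m) (EuclideanSpace.single i 1) =
      U (Fin.last N) (evalS U m l₂ φ₀) + U (Fin.last N) (evalS U m l₂ (flipOp k φ₁)) := by
    rw [Psi, W_apply, hsplit, evalS_append, evalS_cons,
      if_pos (Finset.mem_insert_self k m), evalS_congr U m k l₁ hk1,
      evalS_congr U m k l₂ hk2, hMφ, map_add, map_add]
  have hsupφ : SuppF k φ := U_supp (hU _) (evalS_supp U hU m k l₁ hk1 (init_suppF hd i k))
  have hsup0 : SuppF k φ₀ := by
    intro a' j' b' hb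
    rw [hφ₀]
    dsimp only
    by_cases h : j' k = false
    · rw [if_pos h]; exact hsupφ a' j' b' hb
    · rw [if_neg h]
  have hsup1 : SuppF k φ₁ := by
    intro a' j' b' hb
    rw [hφ₁]
    dsimp only
    by_cases h : j' k = true
    · rw [if_pos h]; exact hsupφ a' j' b' hb
    · rw [if_neg h]
  set y0 := U (Fin.last N) (evalS U m l₂ φ₀) with hy0def
  set y1 := U (Fin.last N) (evalS U m l₂ φ₁) with hy1def
  have hB0 : SuppF k y0 := U_supp (hU _) (evalS_supp U hU m k l₂ hk2 hsup0)
  have hB1 : SuppF k y1 := U_supp (hU _) (evalS_supp U hU m k l₂ hk2 hsup1)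
  have hcomm : U (Fin.last N) (evalS U m l₂ (flipOp k φ₁)) = flipOp k y1 := by
    rw [evalS_comm_flip U hU m k l₂ hk2, U_comm_flip (hU _)]
  rw [hcomm] at hPsim'
  cases hik : i k
  · -- i k = false : the flipped branch vanishes and the states agree
    have hflip0 : ∀ p : Idx N d, flipOp k y1 p = 0 := by
      rintro ⟨a', j', b'⟩
      cases hbk : b' k
      · exact flipOp_supp_eval hB1 a' j' b' hbk
      · have hmask : b' ≠ mask i (insert k m) := by
          intro h
          rw [h] at hbk
          simp [mask, Finset.mem_insert_self, hik] at hbk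
        have hTv := hT i (insert k m) a' j' b' hmask
        rw [hPsim', PiLp.add_apply, hB0 a' j' b' hbk, zero_add] at hTv
        exact hTv
    have hy1 : y1 = 0 := by
      ext p
      obtain ⟨a', j', b'⟩ := p
      have h := hflip0 (a', j', bflip k b')
      rw [show flipOp k y1 (a', j', bflip k b') = y1 (a', j', bflip k (bflip k b'))
        from rfl, bflip_bflip] at h
      exact h
    rw [hPsim', hPsim, hy1, flipOp_zero]
    simp [hik]
  · -- i k = true : the unflipped branch vanishes
    have hy0 : y0 = 0 := by
      ext p
      obtain ⟨a', j', b'⟩ := p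
      show y0 (a', j', b') = 0
      cases hbk : b' k
      · have hmask : b' ≠ mask i (insert k m) := by
          intro h
          rw [h] at hbk
          simp [mask, Finset.mem_insert_self, hik] at hbk
        have hTv := hT i (insert k m) a' j' b' hmask
        rw [hPsim', PiLp.add_apply, flipOp_supp_eval hB1 a' j' b' hbk, add_zero] at hTv
        exact hTv
      · exact hB0 a' j' b' hbk
    rw [hPsim', hPsim, hy0, zero_add, zero_add, if_pos rfl]
    rfl

lemma psi_diag (U : Fin (N + 1) → (H N d ≃ₗᵢ[ℂ] H N d)) (hU : ∀ t, ActsOnFirstTwo (U t))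
    (hd : 0 < d) (hT : CondT U hd) (i : Bits N) (m : Finset (Fin N)) (a : Fin d) :
    Psi U hd m (EuclideanSpace.single i 1) (a, i, mask i m) =
      Psi U hd ∅ (EuclideanSpace.single i 1) (a, i, mask i (∅ : Finset (Fin N))) := by
  classical
  induction m using Finset.induction_on with
  | empty => rfl
  | @insert k m hk ih =>
      rw [psi_insert U hU hd hT i m k hk]
      have hmask : (if i k then bflip k (mask i (insert k m)) else mask i (insert k m))
          = mask i m := by
        cases hik : i k
        · rw [if_neg Bool.false_ne_true]
          funext l
          by_cases hlk : l = k
          · subst hlk; simp [mask, hik, hk]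
          · simp [mask, Finset.mem_insert, hlk]
        · rw [if_pos rfl]
          funext l
          by_cases hlk : l = k
          · subst hlk
            rw [bflip_self]
            simp [mask, hk, hik]
          · rw [bflip_ne _ _ hlk]
            simp [mask, Finset.mem_insert, hlk]
      rw [hmask, ih]

end Main

/-- If an attack satisfies the no-error conditions (T) and (Z),
then there is a family of unit vectors `F i` of Eve's probe space such that for
every bitstring `i` and every `m`, the final state `Ψ_m(δ_i)` is the elementary
tensor `F i ⊗ δ_i ⊗ δ_{i∧m}`. -/
theorem protocol2_final_state (N d : ℕ) (hN : 1 ≤ N) (hd : 0 < d)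
    (U : Fin (N + 1) → (H N d ≃ₗᵢ[ℂ] H N d))
    (hU : ∀ t, ActsOnFirstTwo (U t))
    (hT : CondT U hd) (hZ : CondZ U hd) :
    ∃ F : Bits N → EuclideanSpace ℂ (Fin d),
      (∀ i, ‖F i‖ = 1) ∧
      ∀ (i : Bits N) (m : Finset (Fin N)) (a : Fin d) (j b : Bits N),
        Psi U hd m (EuclideanSpace.single i 1) (a, j, b) =
          if j = i ∧ b = mask i m then F i a else 0 := by
  classical
  let F : Bits N → EuclideanSpace ℂ (Fin d) := fun i => WithLp.toLp 2 (fun a =>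
    Psi U hd ∅ (EuclideanSpace.single i 1) (a, i, mask i (∅ : Finset (Fin N))))
  have hmain : ∀ (i : Bits N) (m : Finset (Fin N)) (a : Fin d) (j b : Bits N),
      Psi U hd m (EuclideanSpace.single i 1) (a, j, b) =
        if j = i ∧ b = mask i m then F i a else 0 := by
    intro i m a j b
    by_cases hj : j = i
    · by_cases hb : b = mask i m
      · subst hj; subst hb
        rw [if_pos ⟨rfl, rfl⟩]
        exact psi_diag U hU hd hT _ m a
      · rw [if_neg (fun h => hb h.2)]
        exact hT i m a j b hb
    · rw [if_neg (fun h => hj h.1)]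
      exact hZ i m a j b hj
  refine ⟨F, fun i => ?_, hmain⟩
  have h1 : ‖Psi U hd ∅ (EuclideanSpace.single i 1)‖ = 1 := by
    rw [Psi, LinearIsometryEquiv.norm_map, init_single, EuclideanSpace.norm_single, norm_one]
  rw [EuclideanSpace.norm_eq] at h1 ⊢
  rw [← h1]
  congr 1
  rw [Fintype.sum_prod_type]
  refine Finset.sum_congr rfl fun a _ => ?_
  rw [Fintype.sum_prod_type]
  have hval : ∀ j b : Bits N,
      ‖Psi U hd ∅ (EuclideanSpace.single i 1) (a, j, b)‖ ^ 2 =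
        if j = i then (if b = mask i (∅ : Finset (Fin N)) then ‖F i a‖ ^ 2 else 0) else 0 := by
    intro j b
    rw [hmain i ∅ a j b]
    by_cases hj : j = i
    · by_cases hb : b = mask i (∅ : Finset (Fin N))
      · rw [if_pos ⟨hj, hb⟩, if_pos hj, if_pos hb]
      · rw [if_neg (fun h => hb h.2), if_pos hj, if_neg hb]
        simp
    · rw [if_neg (fun h => hj h.1), if_neg hj]
      simp
  rw [show (∑ j : Bits N, ∑ b : Bits N,
        ‖Psi U hd ∅ (EuclideanSpace.single i 1) (a, j, b)‖ ^ 2)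
      = ∑ j : Bits N, (if j = i then
          (∑ b : Bits N, if b = mask i (∅ : Finset (Fin N)) then ‖F i a‖ ^ 2 else 0) else 0) from
    Finset.sum_congr rfl fun j _ => by
      by_cases hj : j = i
      · rw [if_pos hj]
        exact Finset.sum_congr rfl fun b _ => by rw [hval j b, if_pos hj]
      · rw [if_neg hj]
        exact Finset.sum_eq_zero fun b _ => by rw [hval j b, if_neg hj]]
  rw [Finset.sum_ite_eq' Finset.univ i
      (fun _ => ∑ b : Bits N, if b = mask i (∅ : Finset (Fin N)) then ‖F i a‖ ^ 2 else 0),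
    if_pos (Finset.mem_univ i),
    Finset.sum_ite_eq' Finset.univ (mask i (∅ : Finset (Fin N))) (fun _ => ‖F i a‖ ^ 2),
    if_pos (Finset.mem_univ _)]

end SQKD2
end

section
/- Complete robustness of Protocol 2: under the Protocol 2 model, if N ≥ 2 and an attack (U_1,…,U_{N+1}) satisfies the no-error conditions (T), (Z) and (X), then there exists a unit vector f ∈ EuclideanSpace ℂ (Fin d) such that for every input φ ∈ EuclideanSpace ℂ (Fin N → Bool) and every m : Finset (Fin N), the final state is Ψ_m(φ) = Σ_i φ(i) · f ⊗ δ_i ⊗ δ_{i∧m}; concretely, the coefficient of Ψ_m(φ) at any basis index (a,j,b) equals f(a)·φ(j) if b = j∧m and 0 otherwise. In particular Eve's probe state f is independent of the state φ sent by Alice and of Bob's choices m. -/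
/-!
Protocol 2 model (semi-quantum key distribution, measure-resend):
see Boyer, Gelles, Kenigsberg, Mor, "Semi-Quantum Key Distribution".
-/

namespace SQKD2

variable {N d : ℕ}

abbrev K (N d : ℕ) := EuclideanSpace ℂ (Fin d × Bits N)

noncomputable def emb (ψ : K N d) (b₀ : Bits N) : H N d :=
  WithLp.toLp 2 (fun p : Idx N d => if p.2.2 = b₀ then ψ (p.1, p.2.1) else 0)

lemma emb_apply (ψ : K N d) (b₀ : Bits N) (a : Fin d) (j b : Bits N) :
    emb ψ b₀ (a, j, b) = if b = b₀ then ψ (a, j) else 0 := rfl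

lemma emb_eq_sum (ψ : K N d) (b₀ : Bits N) :
    emb ψ b₀ = ∑ q : Fin d × Bits N, ψ q • EuclideanSpace.single (q.1, q.2, b₀) (1 : ℂ) := by
  ext p
  rw [WithLp.ofLp_sum, Finset.sum_apply]
  rcases p with ⟨a, j, b⟩
  simp only [PiLp.smul_apply, EuclideanSpace.single_apply, smul_eq_mul, mul_ite, mul_one, mul_zero]
  by_cases hb : b = b₀
  · subst hb
    rw [Finset.sum_eq_single (a, j)]
    · simp [emb]
    · intro q _ hq
      rw [if_neg]
      rintro ⟨rfl, rfl, rfl⟩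
      exact hq rfl
    · simp
  · rw [Finset.sum_eq_zero, emb_apply, if_neg hb]
    intro q _
    rw [if_neg]
    rintro ⟨rfl, rfl, rfl⟩
    exact hb rfl

lemma acts_emb {V : H N d ≃ₗᵢ[ℂ] H N d} (hV : ActsOnFirstTwo V) (ψ : K N d) :
    ∃ ψ' : K N d, ∀ b₀, V (emb ψ b₀) = emb ψ' b₀ := by
  obtain ⟨c, hc⟩ := hV
  refine ⟨WithLp.toLp 2 (fun q => ∑ r : Fin d × Bits N, ψ r * c q r), fun b₀ => ?_⟩
  ext p
  rcases p with ⟨a', j', b'⟩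
  rw [emb_eq_sum, map_sum, WithLp.ofLp_sum, Finset.sum_apply]
  simp only [map_smul, PiLp.smul_apply, smul_eq_mul, hc, emb_apply, mul_ite, mul_zero]
  by_cases hb : b' = b₀
  · simp [hb]
  · simp [hb]

lemma update_xor_eq_iff (k : Fin N) (c : Bool) (b b₀ : Bits N) :
    Function.update b k (xor (b k) c) = b₀ ↔ b = Function.update b₀ k (xor (b₀ k) c) := by
  constructor
  · rintro rfl
    funext l
    by_cases hl : l = k
    · subst hl
      simp [Bool.xor_assoc]
    · simp [Function.update_of_ne hl]
  · rintro rfl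
    funext l
    by_cases hl : l = k
    · subst hl
      simp [Bool.xor_assoc]
    · simp [Function.update_of_ne hl]

/-- projection of a `K`-vector onto the part where travelling-qubit `k` reads `β`. -/
noncomputable def proj (k : Fin N) (β : Bool) (ψ : K N d) : K N d :=
  WithLp.toLp 2 (fun q : Fin d × Bits N => if q.2 k = β then ψ q else 0)

lemma M_emb_split (k : Fin N) (ψ : K N d) (b₀ : Bits N) :
    M k (emb ψ b₀) =
      emb (proj k false ψ) (Function.update b₀ k (xor (b₀ k) false)) +
      emb (proj k true ψ) (Function.update b₀ k (xor (b₀ k) true)) := by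
  ext p
  rcases p with ⟨a, j, b⟩
  rw [M_apply, PiLp.add_apply]
  show (if Function.update b k (xor (b k) (j k)) = b₀ then ψ (a, j) else 0) = _
  rw [emb_apply, emb_apply]
  simp only [update_xor_eq_iff, proj]
  rcases Bool.eq_false_or_eq_true (j k) with hjk | hjk <;> simp [hjk]

lemma proj_eq_self {k : Fin N} {β : Bool} {ψ : K N d}
    (hs : ∀ q : Fin d × Bits N, q.2 k ≠ β → ψ q = 0) : proj k β ψ = ψ := by
  ext q
  by_cases h : q.2 k = β
  · simp [proj, h]
  · simp [proj, h, hs q h]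

lemma proj_eq_zero {k : Fin N} {β : Bool} {ψ : K N d}
    (hs : ∀ q : Fin d × Bits N, q.2 k ≠ β → ψ q = 0) : proj k (!β) ψ = 0 := by
  ext q
  by_cases h : q.2 k = β <;> simp [proj, h, hs q]

lemma emb_zero (b₀ : Bits N) : emb (0 : K N d) b₀ = 0 := by
  ext p; simp [emb]

lemma M_emb_of_supp (k : Fin N) (β : Bool) (ψ : K N d)
    (hs : ∀ q : Fin d × Bits N, q.2 k ≠ β → ψ q = 0) (b₀ : Bits N) :
    M k (emb ψ b₀) = emb ψ (Function.update b₀ k (xor (b₀ k) β)) := by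
  rw [M_emb_split]
  cases β
  · rw [proj_eq_self hs]
    have : proj k true ψ = 0 := by simpa using proj_eq_zero hs
    rw [this, emb_zero, add_zero]
  · rw [proj_eq_self hs]
    have : proj k false ψ = 0 := by simpa using proj_eq_zero hs
    rw [this, emb_zero, zero_add]

/-- One step of the protocol evolution. -/
noncomputable def step (U : Fin (N + 1) → (H N d ≃ₗᵢ[ℂ] H N d)) (m : Finset (Fin N))
    (acc : H N d ≃ₗᵢ[ℂ] H N d) (k : Fin N) : H N d ≃ₗᵢ[ℂ] H N d :=
  (acc.trans (U k.castSucc)).trans (if k ∈ m then M k else LinearIsometryEquiv.refl ℂ (H N d))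

/-- Partial evolution over a list of steps. -/
noncomputable def Fm (U : Fin (N + 1) → (H N d ≃ₗᵢ[ℂ] H N d)) (m : Finset (Fin N))
    (l : List (Fin N)) : H N d ≃ₗᵢ[ℂ] H N d :=
  l.foldl (step U m) (LinearIsometryEquiv.refl ℂ (H N d))

lemma W_eq (U : Fin (N + 1) → (H N d ≃ₗᵢ[ℂ] H N d)) (m : Finset (Fin N)) :
    W U m = (Fm U m (List.finRange N)).trans (U (Fin.last N)) := rfl

lemma foldl_step_trans (U : Fin (N + 1) → (H N d ≃ₗᵢ[ℂ] H N d)) (m : Finset (Fin N))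
    (l : List (Fin N)) (a e : H N d ≃ₗᵢ[ℂ] H N d) :
    l.foldl (step U m) (a.trans e) = a.trans (l.foldl (step U m) e) := by
  induction l generalizing e with
  | nil => rfl
  | cons k l ih =>
      have hst : step U m (a.trans e) k = a.trans (step U m e k) := by
        simp only [step]
        ext x
        rfl
      rw [List.foldl_cons, List.foldl_cons, hst, ih]

lemma Fm_append (U : Fin (N + 1) → (H N d ≃ₗᵢ[ℂ] H N d)) (m : Finset (Fin N))
    (l₁ l₂ : List (Fin N)) :
    Fm U m (l₁ ++ l₂) = (Fm U m l₁).trans (Fm U m l₂) := by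
  rw [Fm, List.foldl_append]
  have : (Fm U m l₁ : H N d ≃ₗᵢ[ℂ] H N d)
      = (Fm U m l₁).trans (LinearIsometryEquiv.refl ℂ (H N d)) := by
    ext x; rfl
  rw [show (List.foldl (step U m) (LinearIsometryEquiv.refl ℂ (H N d)) l₁ : H N d ≃ₗᵢ[ℂ] H N d)
      = Fm U m l₁ from rfl, this, foldl_step_trans]
  rfl

/-- The evolution maps `emb`-states to `emb`-states uniformly in the Bob register. -/
def PE (V : H N d ≃ₗᵢ[ℂ] H N d) : Prop :=
  ∀ ψ : K N d, ∃ ψ' : K N d, ∀ b₀, V (emb ψ b₀) = emb ψ' b₀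

lemma PE_refl : PE (LinearIsometryEquiv.refl ℂ (H N d)) :=
  fun ψ => ⟨ψ, fun _ => rfl⟩

lemma PE_trans {V V' : H N d ≃ₗᵢ[ℂ] H N d} (h : PE V) (h' : PE V') : PE (V.trans V') := by
  intro ψ
  obtain ⟨ψ₁, h1⟩ := h ψ
  obtain ⟨ψ₂, h2⟩ := h' ψ₁
  exact ⟨ψ₂, fun b₀ => by simp [LinearIsometryEquiv.trans_apply, h1 b₀, h2 b₀]⟩

lemma PE_Fm (U : Fin (N + 1) → (H N d ≃ₗᵢ[ℂ] H N d)) (hU : ∀ t, ActsOnFirstTwo (U t))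
    (m : Finset (Fin N)) (l : List (Fin N)) (hl : ∀ k ∈ l, k ∉ m) :
    PE (Fm U m l) := by
  induction l using List.reverseRecOn with
  | nil => exact PE_refl
  | append_singleton l k ih =>
      rw [Fm_append]
      refine PE_trans (ih fun k' hk' => hl k' (List.mem_append_left _ hk')) ?_
      have hk : k ∉ m := hl k (List.mem_append_right _ (List.mem_singleton_self k))
      show PE (Fm U m [k])
      have : Fm U m [k] = ((LinearIsometryEquiv.refl ℂ (H N d)).trans (U k.castSucc)).trans
          (LinearIsometryEquiv.refl ℂ (H N d)) := by
        simp [Fm, step, hk]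
      rw [this]
      refine PE_trans (PE_trans PE_refl ?_) PE_refl
      exact fun ψ => acts_emb (hU k.castSucc) ψ

lemma emb_eq_zero_iff (ψ : K N d) (b₀ : Bits N) : emb ψ b₀ = 0 ↔ ψ = 0 := by
  constructor
  · intro h
    ext q
    have := congrArg (fun x : H N d => x (q.1, q.2, b₀)) h
    simpa [emb] using this
  · rintro rfl; exact emb_zero b₀

lemma init_eq_emb (hd : 0 < d) (φ : EuclideanSpace ℂ (Bits N)) :
    init hd φ = emb (WithLp.toLp 2 (fun q : Fin d × Bits N => if q.1 = (⟨0, hd⟩ : Fin d) then φ q.2 else 0)) (fun _ => false) := by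
  ext p
  rcases p with ⟨a, j, b⟩
  show (if a = (⟨0, hd⟩ : Fin d) ∧ b = (fun _ => false) then φ j else 0) = _
  rw [emb_apply]
  by_cases h1 : a = (⟨0, hd⟩ : Fin d) <;> by_cases h2 : b = (fun _ => false) <;>
    simp [h1, h2]

lemma Fm_singleton (U : Fin (N + 1) → (H N d ≃ₗᵢ[ℂ] H N d)) (m : Finset (Fin N))
    (k : Fin N) (x : H N d) :
    Fm U m [k] x =
      (if k ∈ m then M k else LinearIsometryEquiv.refl ℂ (H N d)) (U k.castSucc x) := rfl

lemma key (U : Fin (N + 1) → (H N d ≃ₗᵢ[ℂ] H N d)) (hU : ∀ t, ActsOnFirstTwo (U t))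
    (hd : 0 < d) (hT : CondT U hd) (i : Bits N) :
    ∀ k, k ≤ N → ∃ ψ : K N d, ∀ m : Finset (Fin N),
      Fm U m ((List.finRange N).take k) (init hd (EuclideanSpace.single i 1)) =
        emb ψ (fun l => if l ∈ m ∧ l.1 < k then i l else false) := by
  intro k
  induction k with
  | zero =>
      intro _
      refine ⟨WithLp.toLp 2 (fun q : Fin d × Bits N => if q.1 = (⟨0, hd⟩ : Fin d) then EuclideanSpace.single i 1 q.2 else 0),
        fun m => ?_⟩
      have h0 : (fun l => if l ∈ m ∧ l.1 < 0 then i l else false) = (fun _ => false : Bits N) := by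
        funext l; simp
      rw [h0, List.take_zero]
      show init hd (EuclideanSpace.single i 1) = _
      exact init_eq_emb hd _
  | succ k ih =>
      intro hk1
      have hkN : k < N := hk1
      set κ : Fin N := ⟨k, hkN⟩ with hκ
      obtain ⟨ψk, hψk⟩ := ih (le_of_lt hkN)
      obtain ⟨ψ', hψ'⟩ := acts_emb (hU κ.castSucc) ψk
      have htake : (List.finRange N).take (k + 1) = (List.finRange N).take k ++ [κ] := by
        rw [List.take_succ]
        congr 1
        rw [List.getElem?_eq_getElem (by simpa using hkN)]
        simp [hκ]
      have heval : ∀ m : Finset (Fin N),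
          Fm U m ((List.finRange N).take (k + 1)) (init hd (EuclideanSpace.single i 1)) =
          (if κ ∈ m then M κ else LinearIsometryEquiv.refl ℂ (H N d))
            (emb ψ' (fun l => if l ∈ m ∧ l.1 < k then i l else false)) := by
        intro m
        rw [htake, Fm_append, LinearIsometryEquiv.trans_apply, hψk m, Fm_singleton, hψ']
      set bf : Bits N := (fun _ => false) with hbf
      set eκ : Bits N := Function.update bf κ true with heκ
      have heκbf : eκ ≠ bf := by
        intro h
        have := congrFun h κ
        simp [heκ, hbf] at this
      have hbfm : (fun l => if l ∈ ({κ} : Finset (Fin N)) ∧ l.1 < k then i l else false) = bf := by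
        funext l
        by_cases hl : l = κ
        · subst hl; simp [hκ, hbf]
        · simp [Finset.mem_singleton, hl, hbf]
      have huf : Function.update bf κ (xor (bf κ) false) = bf := by
        funext l; by_cases hl : l = κ <;> simp [hl, hbf]
      have hut : Function.update bf κ (xor (bf κ) true) = eκ := by
        funext l
        by_cases hl : l = κ
        · subst hl; rw [heκ, Function.update_self, Function.update_self]; simp [hbf]
        · rw [heκ, Function.update_of_ne hl, Function.update_of_ne hl]
      set l₂ := (List.finRange N).drop (k + 1) with hl₂
      have hκtake : κ ∈ (List.finRange N).take (k + 1) := by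
        rw [htake]; exact List.mem_append_right _ (List.mem_singleton_self κ)
      have hdisj : ∀ k' ∈ l₂, k' ∉ ({κ} : Finset (Fin N)) := by
        intro k' hk' hk''
        rw [Finset.mem_singleton] at hk''
        subst hk''
        have hnd := List.nodup_finRange N
        rw [← List.take_append_drop (k + 1) (List.finRange N), List.nodup_append] at hnd
        exact hnd.2.2 κ hκtake κ hk' rfl
      have hPE := PE_Fm U hU {κ} l₂ hdisj
      obtain ⟨pf', hpf'⟩ := hPE (proj κ false ψ')
      obtain ⟨pt', hpt'⟩ := hPE (proj κ true ψ')
      obtain ⟨pf'', hpf''⟩ := acts_emb (hU (Fin.last N)) pf'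
      obtain ⟨pt'', hpt''⟩ := acts_emb (hU (Fin.last N)) pt'
      have hPsiκ : Psi U hd ({κ} : Finset (Fin N)) (EuclideanSpace.single i 1) =
          emb pf'' bf + emb pt'' eκ := by
        rw [Psi, W_eq, LinearIsometryEquiv.trans_apply,
          ← List.take_append_drop (k + 1) (List.finRange N), Fm_append,
          LinearIsometryEquiv.trans_apply, heval ({κ} : Finset (Fin N)),
          if_pos (Finset.mem_singleton_self κ), hbfm, M_emb_split, huf, hut, map_add,
          hpf' bf, hpt' eκ, map_add, hpf'' bf, hpt'' eκ]
      have hsupp : ∀ q : Fin d × Bits N, q.2 κ ≠ i κ → ψ' q = 0 := by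
        rcases hik : i κ with _ | _
        · have hmask : mask i ({κ} : Finset (Fin N)) = bf := by
            funext l
            by_cases hl : l = κ
            · subst hl; simp [mask, hik, hbf]
            · simp [mask, Finset.mem_singleton, hl, hbf]
          have hz : pt'' = 0 := by
            ext q
            have h0 := hT i {κ} q.1 q.2 eκ (by rw [hmask]; exact heκbf)
            rw [hPsiκ] at h0
            rcases q with ⟨a, j⟩
            simpa [PiLp.add_apply, emb_apply, heκbf] using h0
          have hembz : emb (proj κ true ψ') eκ = 0 := by
            have h1 : (U (Fin.last N)) ((Fm U {κ} l₂) (emb (proj κ true ψ') eκ)) = 0 := by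
              rw [hpt' eκ, hpt'' eκ, hz, emb_zero]
            rw [LinearIsometryEquiv.map_eq_zero_iff, LinearIsometryEquiv.map_eq_zero_iff] at h1
            exact h1
          have hp0 : proj κ true ψ' = 0 := (emb_eq_zero_iff _ _).mp hembz
          intro q hq
          have hqt : q.2 κ = true := by
            revert hq; cases q.2 κ <;> simp
          have := congrArg (fun x : K N d => x q) hp0
          simpa [proj, hqt] using this
        · have hmask : mask i ({κ} : Finset (Fin N)) = eκ := by
            funext l
            by_cases hl : l = κ
            · subst hl; simp [mask, hik, heκ, hbf]
            · simp [mask, Finset.mem_singleton, hl, heκ, hbf, Function.update_of_ne hl]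
          have hz : pf'' = 0 := by
            ext q
            have h0 := hT i {κ} q.1 q.2 bf (by rw [hmask]; exact heκbf.symm)
            rw [hPsiκ] at h0
            rcases q with ⟨a, j⟩
            simpa [PiLp.add_apply, emb_apply, heκbf.symm] using h0
          have hembz : emb (proj κ false ψ') bf = 0 := by
            have h1 : (U (Fin.last N)) ((Fm U {κ} l₂) (emb (proj κ false ψ') bf)) = 0 := by
              rw [hpf' bf, hpf'' bf, hz, emb_zero]
            rw [LinearIsometryEquiv.map_eq_zero_iff, LinearIsometryEquiv.map_eq_zero_iff] at h1
            exact h1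
          have hp0 : proj κ false ψ' = 0 := (emb_eq_zero_iff _ _).mp hembz
          intro q hq
          have hqt : q.2 κ = false := by
            revert hq; cases q.2 κ <;> simp
          have := congrArg (fun x : K N d => x q) hp0
          simpa [proj, hqt] using this
      refine ⟨ψ', fun m => ?_⟩
      rw [heval m]
      have hκk : (κ : ℕ) = k := rfl
      by_cases hm : κ ∈ m
      · rw [if_pos hm, M_emb_of_supp κ (i κ) ψ' hsupp]
        have harg : Function.update (fun l => if l ∈ m ∧ (l : ℕ) < k then i l else false) κ
            (xor ((fun l => if l ∈ m ∧ (l : ℕ) < k then i l else false) κ) (i κ)) =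
            (fun l => if l ∈ m ∧ (l : ℕ) < k + 1 then i l else false) := by
          funext l
          by_cases hl : l = κ
          · subst hl
            rw [Function.update_self]
            simp [hm, hκk]
          · rw [Function.update_of_ne hl]
            have hlk : (l : ℕ) ≠ k := fun hc => hl (Fin.ext hc)
            have hiff : ((l : ℕ) < k) ↔ ((l : ℕ) < k + 1) := by omega
            simp [hiff]
        rw [harg]
      · rw [if_neg hm]
        show emb ψ' _ = _
        have harg : (fun l => if l ∈ m ∧ (l : ℕ) < k then i l else false) =
            (fun l : Fin N => if l ∈ m ∧ (l : ℕ) < k + 1 then i l else false) := by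
          funext l
          by_cases hl : l = κ
          · subst hl; simp [hm]
          · have hlk : (l : ℕ) ≠ k := fun hc => hl (Fin.ext hc)
            have hiff : ((l : ℕ) < k) ↔ ((l : ℕ) < k + 1) := by omega
            simp [hiff]
        rw [harg]

lemma psi_formula (U : Fin (N + 1) → (H N d ≃ₗᵢ[ℂ] H N d)) (hU : ∀ t, ActsOnFirstTwo (U t))
    (hd : 0 < d) (hT : CondT U hd) (i : Bits N) :
    ∃ ψ : K N d, ∀ m : Finset (Fin N),
      Psi U hd m (EuclideanSpace.single i 1) = emb ψ (mask i m) := by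
  obtain ⟨ψN, hψN⟩ := key U hU hd hT i N le_rfl
  obtain ⟨ψs, hψs⟩ := acts_emb (hU (Fin.last N)) ψN
  refine ⟨ψs, fun m => ?_⟩
  have hfr : (List.finRange N).take N = List.finRange N := by
    have := List.take_length (l := List.finRange N)
    rwa [List.length_finRange] at this
  have hmask : (fun l => if l ∈ m ∧ (l : ℕ) < N then i l else false) = mask i m := by
    funext l; simp [mask, l.isLt]
  rw [Psi, W_eq, LinearIsometryEquiv.trans_apply, ← hfr, hψN m, hmask, hψs]

lemma norm_emb (ψ : K N d) (b₀ : Bits N) : ‖emb ψ b₀‖ = ‖ψ‖ := by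
  rw [EuclideanSpace.norm_eq, EuclideanSpace.norm_eq]
  congr 1
  simp only [Fintype.sum_prod_type, emb_apply]
  refine Finset.sum_congr rfl fun a _ => Finset.sum_congr rfl fun j _ => ?_
  have hb : ∀ b : Bits N, ‖if b = b₀ then ψ (a, j) else 0‖ ^ 2 =
      if b = b₀ then ‖ψ (a, j)‖ ^ 2 else 0 := by
    intro b; split <;> simp
  rw [Finset.sum_congr rfl fun b _ => hb b, Finset.sum_ite_eq' Finset.univ b₀
    (fun _ => ‖ψ (a, j)‖ ^ 2)]
  simp

lemma norm_init (hd : 0 < d) (i : Bits N) :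
    ‖init hd (EuclideanSpace.single i (1 : ℂ))‖ = 1 := by
  rw [init_eq_emb, norm_emb]
  have : WithLp.toLp 2 (fun q : Fin d × Bits N =>
      if q.1 = (⟨0, hd⟩ : Fin d) then EuclideanSpace.single i (1 : ℂ) q.2 else 0) =
      EuclideanSpace.single ((⟨0, hd⟩ : Fin d), i) (1 : ℂ) := by
    ext q
    rcases q with ⟨a, j⟩
    by_cases h1 : a = (⟨0, hd⟩ : Fin d) <;>
      simp [h1, EuclideanSpace.single_apply, Prod.ext_iff]
  rw [this, EuclideanSpace.norm_single]
  simp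

lemma init_sum (hd : 0 < d) (φ : EuclideanSpace ℂ (Bits N)) :
    init hd φ = ∑ i : Bits N, φ i • init hd (EuclideanSpace.single i 1) := by
  ext p
  rw [WithLp.ofLp_sum, Finset.sum_apply]
  rcases p with ⟨a, j, b⟩
  show (if a = (⟨0, hd⟩ : Fin d) ∧ b = (fun _ => false) then φ j else 0) = _
  have hterm : ∀ i : Bits N, (φ i • init hd (EuclideanSpace.single i 1)) (a, j, b) =
      if a = (⟨0, hd⟩ : Fin d) ∧ b = (fun _ => false) then (if j = i then φ i else 0) else 0 := by
    intro i
    rw [PiLp.smul_apply]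
    show φ i • (if a = (⟨0, hd⟩ : Fin d) ∧ b = (fun _ => false)
      then EuclideanSpace.single i (1 : ℂ) j else 0) = _
    by_cases h : a = (⟨0, hd⟩ : Fin d) ∧ b = (fun _ => false)
    · simp only [if_pos h, EuclideanSpace.single_apply, smul_eq_mul, mul_ite, mul_one, mul_zero]
    · simp [h]
  rw [Finset.sum_congr rfl fun i _ => hterm i]
  by_cases h : a = (⟨0, hd⟩ : Fin d) ∧ b = (fun _ => false)
  · simp only [if_pos h]
    rw [Finset.sum_ite_eq Finset.univ j (fun i => φ i)]
    simp
  · simp [h]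

lemma Psi_sum (U : Fin (N + 1) → (H N d ≃ₗᵢ[ℂ] H N d)) (hd : 0 < d)
    (m : Finset (Fin N)) (φ : EuclideanSpace ℂ (Bits N)) :
    Psi U hd m φ = ∑ i : Bits N, φ i • Psi U hd m (EuclideanSpace.single i 1) := by
  rw [Psi, init_sum, map_sum]
  refine Finset.sum_congr rfl fun i _ => ?_
  rw [map_smul]
  rfl

lemma mask_empty (i : Bits N) : mask i (∅ : Finset (Fin N)) = fun _ => false := by
  funext l; simp [mask]

lemma init_smul_add (hd : 0 < d) (c : ℂ) (φ₁ φ₂ : EuclideanSpace ℂ (Bits N)) :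
    init hd (c • (φ₁ + φ₂)) = c • (init hd φ₁ + init hd φ₂) := by
  ext p
  rcases p with ⟨a, j, b⟩
  have h1 : (c • (φ₁ + φ₂)) j = c * (φ₁ j + φ₂ j) := rfl
  show (if a = (⟨0, hd⟩ : Fin d) ∧ b = (fun _ => false) then (c • (φ₁ + φ₂)) j else 0) = _
  rw [h1, PiLp.smul_apply, PiLp.add_apply]
  show _ = c • ((if a = (⟨0, hd⟩ : Fin d) ∧ b = (fun _ => false) then φ₁ j else 0) +
      (if a = (⟨0, hd⟩ : Fin d) ∧ b = (fun _ => false) then φ₂ j else 0))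
  split <;> simp [mul_add]

lemma Psi_smul_add (U : Fin (N + 1) → (H N d ≃ₗᵢ[ℂ] H N d)) (hd : 0 < d)
    (m : Finset (Fin N)) (c : ℂ) (φ₁ φ₂ : EuclideanSpace ℂ (Bits N)) :
    Psi U hd m (c • (φ₁ + φ₂)) = c • (Psi U hd m φ₁ + Psi U hd m φ₂) := by
  rw [Psi, init_smul_add, map_smul, map_add]
  rfl

/-- **complete robustness of Protocol 2.** If `N ≥ 2` and an
attack satisfies the no-error conditions (T), (Z) and (X), then there is a unit
vector `f` of Eve's probe space such that for every input `φ` and every `m`,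
the final state is `Ψ_m(φ) = Σ_i φ(i) · f ⊗ δ_i ⊗ δ_{i∧m}`: the coefficient of
`Ψ_m(φ)` at a basis index `(a,j,b)` is `f a * φ j` if `b = j∧m` and `0`
otherwise.  In particular Eve's probe state `f` is independent of the state `φ`
sent by Alice and of Bob's choices `m`. -/
theorem protocol2_completely_robust (N d : ℕ) (hN : 2 ≤ N) (hd : 0 < d)
    (U : Fin (N + 1) → (H N d ≃ₗᵢ[ℂ] H N d))
    (hU : ∀ t, ActsOnFirstTwo (U t))
    (hT : CondT U hd) (hZ : CondZ U hd) (hX : CondX U hd) :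
    ∃ f : EuclideanSpace ℂ (Fin d),
      ‖f‖ = 1 ∧
      ∀ (φ : EuclideanSpace ℂ (Bits N)) (m : Finset (Fin N))
        (a : Fin d) (j b : Bits N),
        Psi U hd m φ (a, j, b) = if b = mask j m then f a * φ j else 0 := by
  choose Ψs hΨs using fun i : Bits N => psi_formula U hU hd hT i
  have hzero : ∀ (i : Bits N) (a : Fin d) (j : Bits N), j ≠ i → Ψs i (a, j) = 0 := by
    intro i a j hj
    have h0 := hZ i ∅ a j (mask i ∅) hj
    rw [hΨs i ∅] at h0
    simpa [emb_apply] using h0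
  set g : Bits N → Fin d → ℂ := fun i a => Ψs i (a, i) with hg
  have hcoeff : ∀ (i : Bits N) (m : Finset (Fin N)) (a : Fin d) (j b : Bits N),
      Psi U hd m (EuclideanSpace.single i 1) (a, j, b) =
        if j = i ∧ b = mask i m then g i a else 0 := by
    intro i m a j b
    have h1 : Psi U hd m (EuclideanSpace.single i 1) (a, j, b) =
        if b = mask i m then Ψs i (a, j) else 0 := by rw [hΨs i m]; rfl
    rw [h1]
    by_cases hj : j = i
    · subst hj
      by_cases hb : b = mask j m <;> simp [hb, hg]
    · rw [hzero i a j hj]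
      simp [hj]
  have hsqrt : ((Real.sqrt 2 : ℂ))⁻¹ ≠ 0 := by
    apply inv_ne_zero
    exact_mod_cast Complex.ofReal_ne_zero.mpr (Real.sqrt_ne_zero'.mpr (by norm_num))
  have hflip : ∀ (i : Bits N) (k : Fin N), i k = false →
      ∀ a : Fin d, g i a = g (Function.update i k true) a := by
    intro i k hik a
    set i' := Function.update i k true with hi'
    have hii' : i ≠ i' := by
      intro h
      have := congrFun h k
      rw [hi', Function.update_self, hik] at this
      exact Bool.false_ne_true this
    have hlin : ∀ p : Idx N d, Psi U hd ∅ (((Real.sqrt 2 : ℂ))⁻¹ •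
        (EuclideanSpace.single i 1 + EuclideanSpace.single i' 1)) p =
        ((Real.sqrt 2 : ℂ))⁻¹ * (Psi U hd ∅ (EuclideanSpace.single i 1) p +
          Psi U hd ∅ (EuclideanSpace.single i' 1) p) := by
      intro p
      rw [Psi_smul_add]
      rw [PiLp.smul_apply, PiLp.add_apply]
      rfl
    have hupd : Function.update i k (!(i k)) = i' := by rw [hik, hi']; rfl
    have hXe := hX ∅ k (Finset.notMem_empty k) i hik a i (mask i ∅)
    rw [hlin (a, i, mask i ∅), hupd, hlin (a, i', mask i ∅)] at hXe
    have e1 : Psi U hd ∅ (EuclideanSpace.single i 1) (a, i, mask i ∅) = g i a := by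
      rw [hcoeff]; simp
    have e2 : Psi U hd ∅ (EuclideanSpace.single i' 1) (a, i, mask i' ∅) = 0 := by
      rw [hcoeff]; simp [hii']
    have hii'' : i' ≠ i := fun h => hii' h.symm
    have e3 : Psi U hd ∅ (EuclideanSpace.single i 1) (a, i', mask i ∅) = 0 := by
      rw [hcoeff]; simp [hii'']
    have e4 : Psi U hd ∅ (EuclideanSpace.single i' 1) (a, i', mask i' ∅) = g i' a := by
      rw [hcoeff]; simp
    have hmm : mask i ∅ = mask i' ∅ := by rw [mask_empty, mask_empty]
    rw [e1, e3] at hXe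
    rw [hmm] at hXe
    rw [e2, e4] at hXe
    have := mul_left_cancel₀ hsqrt hXe
    simpa using this
  have hconst : ∀ i : Bits N, ∀ a : Fin d, g i a = g (fun _ => false) a := by
    have main : ∀ n : ℕ, ∀ i : Bits N,
        (Finset.univ.filter fun l => i l = true).card = n →
        ∀ a : Fin d, g i a = g (fun _ => false) a := by
      intro n
      induction n with
      | zero =>
          intro i hi a
          have hiz : i = fun _ => false := by
            funext l
            by_contra hl
            have hlt : i l = true := by revert hl; cases i l <;> simp
            have : l ∈ Finset.univ.filter fun l => i l = true := by
              simp [hlt]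
            rw [Finset.card_eq_zero.mp hi] at this
            exact absurd this (Finset.notMem_empty l)
          rw [hiz]
      | succ n ih =>
          intro i hi a
          have hpos : 0 < (Finset.univ.filter fun l => i l = true).card := by omega
          obtain ⟨k, hk⟩ := Finset.card_pos.mp hpos
          have hik : i k = true := (Finset.mem_filter.mp hk).2
          set i₀ := Function.update i k false with hi₀
          have h2 : i₀ k = false := by simp [hi₀]
          have h1 : Function.update i₀ k true = i := by
            funext l
            by_cases hl : l = k
            · subst hl; simp [hi₀, hik]
            · rw [Function.update_of_ne hl, hi₀, Function.update_of_ne hl]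
          have h3 : (Finset.univ.filter fun l => i₀ l = true) =
              (Finset.univ.filter fun l => i l = true).erase k := by
            ext l
            by_cases hl : l = k
            · subst hl
              simp [hi₀]
            · simp [hi₀, Function.update_of_ne hl, hl]
          have h4 : (Finset.univ.filter fun l => i₀ l = true).card = n := by
            rw [h3, Finset.card_erase_of_mem hk, hi]
            rfl
          have h5 := hflip i₀ k h2 a
          rw [h1] at h5
          rw [← h5, ih i₀ h4 a]
    intro i a
    exact main _ i rfl a
  set f : EuclideanSpace ℂ (Fin d) := WithLp.toLp 2 (fun a => g (fun _ => false) a) with hf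
  have hnorm : ‖f‖ = 1 := by
    set i0 : Bits N := fun _ => false with hi0
    have h1 : ‖Ψs i0‖ = 1 := by
      have ha : ‖emb (Ψs i0) (mask i0 ∅)‖ = ‖Psi U hd ∅ (EuclideanSpace.single i0 1)‖ := by
        rw [hΨs i0 ∅]
      rw [norm_emb] at ha
      rw [ha, Psi, LinearIsometryEquiv.norm_map, norm_init]
    have h2 : ‖f‖ = ‖Ψs i0‖ := by
      rw [EuclideanSpace.norm_eq, EuclideanSpace.norm_eq]
      congr 1
      rw [Fintype.sum_prod_type]
      refine Finset.sum_congr rfl fun a _ => ?_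
      have hrow : ∑ j : Bits N, ‖Ψs i0 (a, j)‖ ^ 2 = ‖Ψs i0 (a, i0)‖ ^ 2 :=
        Finset.sum_eq_single i0 (fun j _ hj => by rw [hzero i0 a j hj]; simp) (by simp)
      rw [hrow]
    rw [h2, h1]
  refine ⟨f, hnorm, ?_⟩
  intro φ m a j b
  rw [Psi_sum, WithLp.ofLp_sum, Finset.sum_apply]
  have hterm : ∀ i : Bits N, (φ i • Psi U hd m (EuclideanSpace.single i 1)) (a, j, b) =
      if i = j then (if b = mask j m then f a * φ j else 0) else 0 := by
    intro i
    rw [PiLp.smul_apply, hcoeff i m a j b]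
    by_cases hj : j = i
    · subst hj
      by_cases hb : b = mask j m
      · simp only [hb, if_pos (And.intro rfl rfl), if_pos rfl, smul_eq_mul]
        rw [hconst j a]
        exact mul_comm _ _
      · simp [hb]
    · have hj' : i ≠ j := fun h => hj h.symm
      simp [hj, hj']
  rw [Finset.sum_congr rfl fun i _ => hterm i,
    Finset.sum_ite_eq' Finset.univ j (fun _ => if b = mask j m then f a * φ j else 0)]
  simp

end SQKD2
end

section
/- For every n : ℕ and every real ε > 0, the number of bitstrings y : Fin n → Bool whose Hamming weight wt y satisfies |wt y / n − 1/2| > ε/2 is at most 2 · 2ⁿ · exp(−ε²·n/2). -/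
open Finset Real

/-- Hamming weight of a bitstring. -/
def wt {n : ℕ} (y : Fin n → Bool) : ℕ := (Finset.univ.filter fun k => y k = true).card

lemma sum_exp_sum (n : ℕ) (c : Bool → ℝ) :
    ∑ y : Fin n → Bool, Real.exp (∑ k, c (y k))
      = (Real.exp (c true) + Real.exp (c false)) ^ n := by
  have h := Finset.prod_univ_sum (fun _ : Fin n => (Finset.univ : Finset Bool))
    (fun _ b => Real.exp (c b))
  simp only [Real.exp_sum]
  rw [show (Fintype.piFinset fun _ : Fin n => (Finset.univ : Finset Bool))
      = (Finset.univ : Finset (Fin n → Bool)) by ext; simp] at h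
  rw [← h]
  simp [Fintype.sum_bool, Finset.prod_const, Finset.card_univ]

lemma chernoff (n : ℕ) (c : Bool → ℝ) (a : ℝ) :
    ((Finset.univ.filter fun y : Fin n → Bool => a < ∑ k, c (y k)).card : ℝ)
      ≤ Real.exp (-a) * (Real.exp (c true) + Real.exp (c false)) ^ n := by
  rw [← sum_exp_sum, Finset.mul_sum]
  calc ((Finset.univ.filter fun y : Fin n → Bool => a < ∑ k, c (y k)).card : ℝ)
      = ∑ _y ∈ (Finset.univ.filter fun y : Fin n → Bool => a < ∑ k, c (y k)), 1 := by
        simp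
    _ ≤ ∑ y ∈ (Finset.univ.filter fun y : Fin n → Bool => a < ∑ k, c (y k)),
          Real.exp (-a) * Real.exp (∑ k, c (y k)) := by
        apply Finset.sum_le_sum
        intro y hy
        rw [← Real.exp_add]
        apply Real.one_le_exp
        have := (Finset.mem_filter.mp hy).2
        linarith
    _ ≤ ∑ y : Fin n → Bool, Real.exp (-a) * Real.exp (∑ k, c (y k)) := by
        apply Finset.sum_le_sum_of_subset_of_nonneg (Finset.filter_subset _ _)
        intros; positivity

/-- **Hoeffding's inequality for `n` uniform bits, as a counting
bound.** For every `n` and every `ε > 0`, the number of `n`-bit strings whose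
Hamming weight `w` satisfies `|w/n − 1/2| > ε/2` is at most
`2 · 2ⁿ · exp(−ε²n/2)`. -/
theorem count_unbalanced_bitstrings_le (n : ℕ) (ε : ℝ) (hε : 0 < ε) :
    ((Finset.univ.filter fun y : Fin n → Bool =>
        ε / 2 < |((wt y : ℝ) / n) - 1 / 2|).card : ℝ) ≤
      2 * 2 ^ n * Real.exp (-(ε ^ 2) * n / 2) := by
  rcases Nat.eq_zero_or_pos n with rfl | hn
  · have h1 : ((Finset.univ.filter fun y : Fin 0 → Bool =>
        ε / 2 < |((wt y : ℝ) / 0) - 1 / 2|).card : ℝ) ≤ 1 := by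
      have := Finset.card_filter_le (Finset.univ : Finset (Fin 0 → Bool))
        (fun y => ε / 2 < |((wt y : ℝ) / 0) - 1 / 2|)
      simp only [Finset.card_univ, Fintype.card_fun, Fintype.card_bool, Fintype.card_fin,
        pow_zero] at this
      exact_mod_cast this
    simp only [pow_zero, Nat.cast_zero, mul_zero, zero_div, neg_zero, Real.exp_zero, mul_one]
    linarith
  have hn' : (0:ℝ) < n := by exact_mod_cast hn
  set g : Bool → ℝ := fun b => if b then ε else -ε with hg
  have hX : ∀ y : Fin n → Bool, ∑ k, g (y k) = ε * (2 * (wt y : ℝ) - n) := by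
    intro y
    rw [← Finset.sum_filter_add_sum_filter_not Finset.univ (fun k => y k = true)]
    have h1 : ∀ k ∈ Finset.univ.filter (fun k => y k = true), g (y k) = ε := by
      intro k hk; simp only [Finset.mem_filter] at hk; simp [hg, hk.2]
    have h2 : ∀ k ∈ Finset.univ.filter (fun k => ¬ (y k = true)), g (y k) = -ε := by
      intro k hk; simp only [Finset.mem_filter] at hk; simp [hg, hk.2]
    rw [Finset.sum_congr rfl h1, Finset.sum_congr rfl h2]
    simp only [Finset.sum_const, nsmul_eq_mul]
    have hle : (Finset.univ.filter (fun k => y k = true)).card ≤ n := by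
      exact (Finset.card_filter_le _ _).trans (by simp)
    have hcard : (Finset.univ.filter (fun k => ¬ (y k = true))).card
        = n - (Finset.univ.filter (fun k => y k = true)).card := by
      rw [Finset.filter_not, Finset.card_sdiff_of_subset (Finset.filter_subset _ _)]
      simp
    rw [hcard]
    unfold wt
    push_cast [Nat.cast_sub hle]
    ring
  have hcond : ∀ y : Fin n → Bool,
      (ε / 2 < |((wt y : ℝ) / n) - 1 / 2|) ↔ (ε * n < |2 * (wt y : ℝ) - n|) := by
    intro y
    have heq : ((wt y : ℝ) / n) - 1 / 2 = (2 * (wt y : ℝ) - n) / (2 * n) := by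
      field_simp
    rw [heq, abs_div, abs_of_pos (by linarith : (0:ℝ) < 2 * n),
      lt_div_iff₀ (by linarith : (0:ℝ) < 2 * n)]
    constructor <;> intro h <;> nlinarith
  have hsplit : (Finset.univ.filter fun y : Fin n → Bool =>
      ε / 2 < |((wt y : ℝ) / n) - 1 / 2|)
      ⊆ (Finset.univ.filter fun y : Fin n → Bool => ε^2 * n < ∑ k, g (y k))
        ∪ (Finset.univ.filter fun y : Fin n → Bool => ε^2 * n < ∑ k, (fun b => -(g b)) (y k)) := by
    intro y hy
    have h := (hcond y).mp (Finset.mem_filter.mp hy).2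
    rcases lt_abs.mp h with h | h
    · refine Finset.mem_union_left _ (Finset.mem_filter.mpr ⟨Finset.mem_univ _, ?_⟩)
      rw [hX]; nlinarith
    · refine Finset.mem_union_right _ (Finset.mem_filter.mpr ⟨Finset.mem_univ _, ?_⟩)
      simp only [Finset.sum_neg_distrib, hX]
      nlinarith
  have hcosh : Real.exp ε + Real.exp (-ε) ≤ 2 * Real.exp (ε ^ 2 / 2) := by
    have := Real.cosh_le_exp_half_sq ε
    rw [Real.cosh_eq] at this
    linarith
  have hbound : ∀ c : Bool → ℝ, Real.exp (c true) + Real.exp (c false) = Real.exp ε + Real.exp (-ε) →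
      ((Finset.univ.filter fun y : Fin n → Bool => ε^2 * n < ∑ k, c (y k)).card : ℝ)
        ≤ 2 ^ n * Real.exp (-(ε ^ 2) * n / 2) := by
    intro c hc
    calc ((Finset.univ.filter fun y : Fin n → Bool => ε^2 * n < ∑ k, c (y k)).card : ℝ)
        ≤ Real.exp (-(ε^2 * n)) * (Real.exp (c true) + Real.exp (c false)) ^ n :=
          chernoff n c (ε^2 * n)
      _ ≤ Real.exp (-(ε^2 * n)) * (2 * Real.exp (ε ^ 2 / 2)) ^ n := by
          apply mul_le_mul_of_nonneg_left _ (Real.exp_nonneg _)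
          apply pow_le_pow_left₀ (by positivity) (by rw [hc]; exact hcosh)
      _ = 2 ^ n * Real.exp (-(ε ^ 2) * n / 2) := by
          rw [mul_pow, ← Real.exp_nat_mul, mul_left_comm, ← Real.exp_add]
          congr 1
          ring
    
  calc ((Finset.univ.filter fun y : Fin n → Bool =>
        ε / 2 < |((wt y : ℝ) / n) - 1 / 2|).card : ℝ)
      ≤ ((Finset.univ.filter fun y : Fin n → Bool => ε^2 * n < ∑ k, g (y k)).card : ℝ)
        + ((Finset.univ.filter fun y : Fin n → Bool => ε^2 * n < ∑ k, (fun b => -(g b)) (y k)).card : ℝ) := by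
        have := (Finset.card_le_card hsplit).trans (Finset.card_union_le _ _)
        exact_mod_cast this
    _ ≤ 2 ^ n * Real.exp (-(ε ^ 2) * n / 2) + 2 ^ n * Real.exp (-(ε ^ 2) * n / 2) := by
        gcongr
        · exact hbound g (by simp [hg])
        · exact hbound (fun b => -(g b)) (by simp [hg, add_comm])
    _ = 2 * 2 ^ n * Real.exp (-(ε ^ 2) * n / 2) := by ring
end

section
/- Let n ≥ 1 be a natural number, let δ, δ' be real numbers with 0 ≤ δ' < δ, and set N = ⌈8n(1+δ)⌉. Then the lower tail of the binomial distribution with N trials and success probability 1/4 satisfies: Σ over k : ℕ, 0 ≤ k ≤ N with (k : ℝ) ≤ 2n(1+δ'), of binomial(N,k)·(1/4)^k·(3/4)^{N−k} ≤ exp(−(1/8)·((δ−δ')/(1+δ))²·n). -/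
open Finset

/-- Key analytic lemma: for `0 < u ≤ 1`, `(u² - 1)/2 ≤ u·log u`. -/
lemma key_ulogu {u : ℝ} (hu0 : 0 < u) (hu1 : u ≤ 1) :
    (u ^ 2 - 1) / 2 ≤ u * Real.log u := by
  have hlog : Real.log u ≤ 0 := Real.log_nonpos hu0.le hu1
  have hs : -Real.log u ≤ Real.sinh (-Real.log u) := by
    rcases lt_or_eq_of_le hlog with h | h
    · exact (Real.self_lt_sinh_iff.mpr (by linarith)).le
    · rw [h]; simp
  rw [Real.sinh_eq, neg_neg, Real.exp_log hu0, Real.exp_neg, Real.exp_log hu0] at hs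
  have h2 := mul_le_mul_of_nonneg_left hs hu0.le
  have hinv : u * u⁻¹ = 1 := mul_inv_cancel₀ (ne_of_gt hu0)
  nlinarith [h2, hinv]

set_option maxHeartbeats 1200000 in
/-- For `n ≥ 1`, `0 ≤ δ' < δ` and `N = ⌈8n(1+δ)⌉`, the lower
tail of the binomial distribution with `N` trials and success probability `1/4`
satisfies
`Σ_{0 ≤ k ≤ N, k ≤ 2n(1+δ')} C(N,k)·(1/4)^k·(3/4)^{N−k}
  ≤ exp(−(1/8)·((δ−δ')/(1+δ))²·n)`. -/
theorem sift_bits_lower_tail (n : ℕ) (hn : 1 ≤ n) (δ δ' : ℝ)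
    (hδ'0 : 0 ≤ δ') (hδ : δ' < δ)
    (N : ℕ) (hN : N = ⌈8 * (n : ℝ) * (1 + δ)⌉₊) :
    ∑ k ∈ (Finset.range (N + 1)).filter (fun k : ℕ => (k : ℝ) ≤ 2 * n * (1 + δ')),
        (N.choose k : ℝ) * (1 / 4) ^ k * (3 / 4) ^ (N - k) ≤
      Real.exp (-(1 / 8) * ((δ - δ') / (1 + δ)) ^ 2 * n) := by
  have hn1 : (1 : ℝ) ≤ n := by exact_mod_cast hn
  have hδpos : (0 : ℝ) < 1 + δ := by linarith
  set m : ℝ := 2 * n * (1 + δ') with hm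
  set μ : ℝ := (N : ℝ) / 4 with hμ
  have hm0 : 0 < m := by nlinarith
  have hNge : 8 * (n : ℝ) * (1 + δ) ≤ N := by
    rw [hN]; exact Nat.le_ceil _
  have hNlt : (N : ℝ) < 8 * n * (1 + δ) + 1 := by
    rw [hN]; exact Nat.ceil_lt_add_one (by nlinarith)
  have hμge : 2 * n * (1 + δ) ≤ μ := by rw [hμ]; linarith
  have hmμ : m < μ := by nlinarith
  have hμpos : 0 < μ := lt_trans hm0 hmμ
  set u : ℝ := m / μ with hu
  have hu0 : 0 < u := div_pos hm0 hμpos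
  have hu1 : u < 1 := (div_lt_one hμpos).mpr hmμ
  have hμu : μ * u = m := by rw [hu]; field_simp
  clear_value u μ m
  -- Step 1: insert weights `u ^ ((k:ℝ) - m) ≥ 1` on the filtered set
  have step1 : ∑ k ∈ (range (N + 1)).filter (fun k : ℕ => (k : ℝ) ≤ m),
      (N.choose k : ℝ) * (1 / 4) ^ k * (3 / 4) ^ (N - k) ≤
      ∑ k ∈ range (N + 1),
      (N.choose k : ℝ) * (1 / 4) ^ k * (3 / 4) ^ (N - k) * u ^ ((k : ℝ) - m) := by
    refine le_trans (Finset.sum_le_sum ?_) (Finset.sum_le_sum_of_subset_of_nonneg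
      (Finset.filter_subset _ _) ?_)
    · intro k hk
      have hkm : (k : ℝ) ≤ m := (Finset.mem_filter.mp hk).2
      have hw : 1 ≤ u ^ ((k : ℝ) - m) :=
        Real.one_le_rpow_of_pos_of_le_one_of_nonpos hu0 hu1.le (by linarith)
      have hnn : 0 ≤ (N.choose k : ℝ) * (1 / 4) ^ k * (3 / 4) ^ (N - k) := by positivity
      nlinarith
    · intro k _ _
      have := Real.rpow_pos_of_pos hu0 ((k : ℝ) - m)
      positivity
  -- Step 2: identify the weighted sum with `u^(-m) * (u/4 + 3/4)^N`
  have step2 : ∑ k ∈ range (N + 1),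
      (N.choose k : ℝ) * (1 / 4) ^ k * (3 / 4) ^ (N - k) * u ^ ((k : ℝ) - m) =
      u ^ (-m) * (u / 4 + 3 / 4) ^ N := by
    rw [add_pow, Finset.mul_sum]
    refine Finset.sum_congr rfl fun k _ => ?_
    have : u ^ ((k : ℝ) - m) = u ^ k * u ^ (-m) := by
      rw [sub_eq_add_neg, Real.rpow_add hu0, Real.rpow_natCast]
    rw [this]
    ring
  -- Step 3: bound `(u/4 + 3/4)^N ≤ exp (μ * (u - 1))`
  have step3 : (u / 4 + 3 / 4) ^ N ≤ Real.exp (μ * (u - 1)) := by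
    have hbase : u / 4 + 3 / 4 ≤ Real.exp ((u - 1) / 4) := by
      have := Real.add_one_le_exp ((u - 1) / 4)
      linarith
    calc (u / 4 + 3 / 4) ^ N ≤ Real.exp ((u - 1) / 4) ^ N :=
          pow_le_pow_left₀ (by linarith) hbase N
      _ = Real.exp ((N : ℝ) * ((u - 1) / 4)) := by
          rw [← Real.exp_nat_mul]
      _ = Real.exp (μ * (u - 1)) := by rw [hμ]; ring_nf
  -- Step 4: turn `u ^ (-m)` into an exponential
  have step4 : u ^ (-m : ℝ) = Real.exp (-m * Real.log u) := by
    rw [Real.rpow_def_of_pos hu0]; ring_nf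
  -- Step 5: final exponent comparison
  have step5 : -m * Real.log u + μ * (u - 1) ≤ -(1 / 8) * ((δ - δ') / (1 + δ)) ^ 2 * n := by
    have hkey := key_ulogu hu0 hu1.le
    have hmlog : m * Real.log u = μ * (u * Real.log u) := by rw [← hμu]; ring
    have h1 : -m * Real.log u + μ * (u - 1) ≤ -(μ * (u - 1) ^ 2) / 2 := by
      rw [neg_mul, hmlog]
      nlinarith [mul_le_mul_of_nonneg_left hkey hμpos.le]
    refine h1.trans ?_
    have h2 : μ * (u - 1) ^ 2 = (μ - m) ^ 2 / μ := by
      rw [hu]; field_simp; ring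
    rw [h2, div_pow]
    have hd : 0 < δ - δ' := by linarith
    have hδ1 : (1 : ℝ) ≤ 1 + δ := by linarith
    have h5 : 2 * n * (δ - δ') ≤ μ - m := by rw [hm]; nlinarith
    have h6 : (2 * n * (δ - δ')) ^ 2 ≤ (μ - m) ^ 2 :=
      pow_le_pow_left₀ (by positivity) h5 2
    have hμle : μ ≤ 2 * n * (1 + δ) + 1 / 4 := by rw [hμ]; linarith
    have hgoal : (1 / 8) * ((δ - δ') ^ 2 / (1 + δ) ^ 2) * n ≤ ((μ - m) ^ 2 / μ) / 2 := by
      have e1 : (1 / 8) * ((δ - δ') ^ 2 / (1 + δ) ^ 2) * (n : ℝ)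
          = ((n : ℝ) * (δ - δ') ^ 2) / (8 * (1 + δ) ^ 2) := by
        have h0 : ((1:ℝ) + δ) ≠ 0 := ne_of_gt hδpos
        field_simp
      have e2 : ((μ - m) ^ 2 / μ) / 2 = (μ - m) ^ 2 / (2 * μ) := by ring
      rw [e1, e2, div_le_div_iff₀ (show (0:ℝ) < 8 * (1 + δ) ^ 2 by positivity) (show (0:ℝ) < 2 * μ by linarith)]
      have A := mul_le_mul_of_nonneg_left hμle
        (show (0 : ℝ) ≤ 2 * n * (δ - δ') ^ 2 by positivity)
      have B := mul_le_mul_of_nonneg_left h6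
        (show (0 : ℝ) ≤ 8 * (1 + δ) ^ 2 by positivity)
      nlinarith [A, B, hd, hδ1, hn1, sq_nonneg (δ - δ'),
        mul_le_mul_of_nonneg_left hδ1 (show (0 : ℝ) ≤ 28 * (n : ℝ) ^ 2 * (δ - δ') ^ 2 by positivity),
        mul_pos (mul_pos hd hd) (mul_pos (lt_of_lt_of_le one_pos hn1) (lt_of_lt_of_le one_pos hn1))]
    linarith
  -- put everything together
  calc ∑ k ∈ (range (N + 1)).filter (fun k : ℕ => (k : ℝ) ≤ m),
        (N.choose k : ℝ) * (1 / 4) ^ k * (3 / 4) ^ (N - k)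
      ≤ u ^ (-m : ℝ) * (u / 4 + 3 / 4) ^ N := by rw [← step2]; exact step1
    _ ≤ Real.exp (-m * Real.log u) * Real.exp (μ * (u - 1)) := by
        rw [step4]
        exact mul_le_mul_of_nonneg_left step3 (Real.exp_pos _).le
    _ = Real.exp (-m * Real.log u + μ * (u - 1)) := (Real.exp_add _ _).symm
    _ ≤ Real.exp (-(1 / 8) * ((δ - δ') / (1 + δ)) ^ 2 * n) := Real.exp_le_exp.mpr step5
end

section
/- Let h, n be natural numbers with n ≤ 2h, let E be a finite type with exactly 2h elements, let q : Fin n → E be injective, and let y : Fin n → Bool have Hamming weight w with n − h ≤ w and w ≤ h. Then the number of functions x : E → Bool that take the value true on exactly h elements and satisfy x(q p) = y p for all p : Fin n equals the binomial coefficient (2h − n choose h − w). -/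
/-- Let `n ≤ 2h`, let `E` have exactly `2h` elements, let
`q : Fin n → E` be injective, and let `y : Fin n → Bool` have Hamming weight
`w` with `n − h ≤ w ≤ h`.  Then the number of `x : E → Bool` taking the value
`true` on exactly `h` elements and satisfying `x ∘ q = y` is the binomial
coefficient `C(2h − n, h − w)`. -/
theorem card_balanced_extensions (h n : ℕ) (hn : n ≤ 2 * h)
    (E : Type) [Fintype E] [DecidableEq E]
    (hE : Fintype.card E = 2 * h) (q : Fin n → E) (hq : Function.Injective q)
    (y : Fin n → Bool) (w : ℕ) (hwdef : w = wt y)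
    (hw1 : n - h ≤ w) (hw2 : w ≤ h) :
    Nat.card {x : E → Bool //
        (Finset.univ.filter fun e => x e = true).card = h ∧ ∀ p, x (q p) = y p} =
      (2 * h - n).choose (h - w) := by
  classical
  set A : Finset E := Finset.image q Finset.univ with hA
  set B : Finset E := Finset.image q (Finset.univ.filter fun p => y p = true) with hB
  have hBA : B ⊆ A := Finset.image_subset_image (Finset.filter_subset _ _)
  have hAcard : A.card = n := by
    rw [hA, Finset.card_image_of_injective _ hq, Finset.card_univ, Fintype.card_fin]
  have hBcard : B.card = w := by
    rw [hB, Finset.card_image_of_injective _ hq, hwdef, wt]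
  have hKcard : Aᶜ.card = 2 * h - n := by
    rw [Finset.card_compl, hAcard, hE]
  have hqpB : ∀ p : Fin n, q p ∈ B ↔ y p = true := by
    intro p
    simp only [hB, Finset.mem_image, Finset.mem_filter, Finset.mem_univ, true_and]
    constructor
    · rintro ⟨p', hp', heq⟩; rwa [hq heq] at hp'
    · intro hp; exact ⟨p, hp, rfl⟩
  have hqA : ∀ p : Fin n, q p ∈ A := fun p => Finset.mem_image_of_mem q (Finset.mem_univ p)
  -- the equivalence
  have e : {x : E → Bool //
      (Finset.univ.filter fun e => x e = true).card = h ∧ ∀ p, x (q p) = y p} ≃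
      {S // S ∈ Aᶜ.powersetCard (h - w)} := by
    refine
      { toFun := fun x => ⟨Aᶜ.filter (fun e => x.1 e = true), ?_⟩
        invFun := fun S => ⟨fun e => decide (e ∈ S.1 ∪ B), ?_, ?_⟩
        left_inv := ?_
        right_inv := ?_ }
    · obtain ⟨x, hx1, hx2⟩ := x
      rw [Finset.mem_powersetCard]
      refine ⟨Finset.filter_subset _ _, ?_⟩
      show (Aᶜ.filter fun e => x e = true).card = h - w
      have hsplit : (Finset.univ.filter fun e => x e = true) =
          B ∪ Aᶜ.filter (fun e => x e = true) := by
        ext e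
        simp only [Finset.mem_filter, Finset.mem_univ, true_and, Finset.mem_union,
          Finset.mem_compl]
        constructor
        · intro he
          by_cases hA' : e ∈ A
          · left
            obtain ⟨p, -, rfl⟩ := Finset.mem_image.mp hA'
            rw [hqpB]
            rw [← hx2 p]; exact he
          · right; exact ⟨hA', he⟩
        · rintro (he | ⟨-, he⟩)
          · obtain ⟨p, hp, rfl⟩ := Finset.mem_image.mp he
            rw [hx2 p]; exact (Finset.mem_filter.mp hp).2
          · exact he
      have hdisj : Disjoint B (Aᶜ.filter (fun e => x e = true)) := by
        refine Finset.disjoint_left.mpr fun e heB heK => ?_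
        exact (Finset.mem_compl.mp (Finset.mem_filter.mp heK).1) (hBA heB)
      have := hx1
      rw [hsplit, Finset.card_union_of_disjoint hdisj, hBcard] at this
      omega
    · -- card = h
      obtain ⟨S, hS⟩ := S
      rw [Finset.mem_powersetCard] at hS
      have hdisj : Disjoint S B := Finset.disjoint_left.mpr fun e heS heB =>
        (Finset.mem_compl.mp (hS.1 heS)) (hBA heB)
      have : (Finset.univ.filter fun e => decide (e ∈ S ∪ B) = true) = S ∪ B := by
        ext e; simp
      rw [this, Finset.card_union_of_disjoint hdisj, hS.2, hBcard]
      omega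
    · -- agrees with y
      obtain ⟨S, hS⟩ := S
      rw [Finset.mem_powersetCard] at hS
      intro p
      have h1 : q p ∉ S := fun hc => (Finset.mem_compl.mp (hS.1 hc)) (hqA p)
      simp only [Finset.mem_union, h1, false_or]
      cases hy : y p
      · simp [hqpB p, hy]
      · simp [hqpB p, hy]
    · rintro ⟨x, hx1, hx2⟩
      ext e
      simp only [Finset.mem_union, Finset.mem_filter, Finset.mem_compl]
      by_cases hA' : e ∈ A
      · obtain ⟨p, -, rfl⟩ := Finset.mem_image.mp hA'
        simp only [hA', not_true, false_and, false_or, hqpB p, ← hx2 p]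
        cases x (q p) <;> simp
      · simp only [hA', not_false_iff, true_and]
        have : e ∉ B := fun hc => hA' (hBA hc)
        simp only [this, or_false]
        cases x e <;> simp
    · rintro ⟨S, hS⟩
      rw [Finset.mem_powersetCard] at hS
      ext e
      simp only [Finset.mem_filter, Finset.mem_compl, decide_eq_true_eq, Finset.mem_union]
      constructor
      · rintro ⟨hA', (heS | heB)⟩
        · exact heS
        · exact absurd (hBA heB) hA'
      · intro heS
        exact ⟨Finset.mem_compl.mp (hS.1 heS), Or.inl heS⟩
  rw [Nat.card_congr e, Nat.card_eq_fintype_card, Fintype.card_coe,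
    Finset.card_powersetCard, hKcard]
end

section
/- Let h, n be natural numbers with n ≤ 2h, let E be a finite type with exactly 2h elements, let q : Fin n → E be injective, and let y : Fin n → Bool have Hamming weight w with n − h ≤ w and w ≤ h. Then, summing over all x : E → Bool that take the value true on exactly h elements and satisfy x ∘ q = y, one has Σ_x 1/|Q(x,y)| = (2h choose h) · (2h−n)! / (2h)! (as real numbers). Consequently, when Alice picks such an x uniformly at random and then picks q uniformly among Q(x,y), every injective n-tuple q from E is announced with the same probability (2h−n)!/(2h)!, independently of y — so the announced indices leak no information about the INFO string y. -/
lemma cardX (h n : ℕ) (E : Type) [Fintype E] [DecidableEq E]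
    (hE : Fintype.card E = 2 * h) (q : Fin n → E) (hq : Function.Injective q)
    (y : Fin n → Bool) (hw2 : wt y ≤ h) :
    (Finset.univ.filter (fun x : E → Bool =>
        (Finset.univ.filter fun e => x e = true).card = h ∧ ∀ p, x (q p) = y p)).card
      = (2 * h - n).choose (h - wt y) := by
  classical
  set A : Finset E := Finset.image q Finset.univ with hA
  set B : Finset E := Finset.image q (Finset.univ.filter fun p => y p = true) with hB
  have hAcard : A.card = n := by
    rw [hA, Finset.card_image_of_injective _ hq, Finset.card_univ, Fintype.card_fin]
  have hBcard : B.card = wt y := by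
    rw [hB, Finset.card_image_of_injective _ hq]; rfl
  have hBA : B ⊆ A := Finset.image_subset_image (Finset.filter_subset _ _)
  have hmemB : ∀ p : Fin n, q p ∈ B ↔ y p = true := by
    intro p
    constructor
    · intro hp
      rw [hB, Finset.mem_image] at hp
      obtain ⟨p', hp', hqe⟩ := hp
      rw [← hq hqe]
      exact (Finset.mem_filter.1 hp').2
    · intro hp
      exact Finset.mem_image_of_mem q (Finset.mem_filter.2 ⟨Finset.mem_univ _, hp⟩)
  have hmemA : ∀ p : Fin n, q p ∈ A := fun p => Finset.mem_image_of_mem q (Finset.mem_univ p)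
  have hcompl : (Finset.univ \ A).card = 2 * h - n := by
    rw [Finset.card_sdiff_of_subset (Finset.subset_univ _), Finset.card_univ, hE, hAcard]
  rw [← hcompl, ← Finset.card_powersetCard]
  -- key fact about members of the filter set
  have key : ∀ x : E → Bool,
      ((Finset.univ.filter fun e => x e = true).card = h ∧ ∀ p, x (q p) = y p) →
      (Finset.univ.filter fun e => x e = true) ∩ A = B := by
    rintro x ⟨hx, hc⟩
    ext e
    simp only [Finset.mem_inter, Finset.mem_filter, Finset.mem_univ, true_and, hA,
      Finset.mem_image]
    constructor
    · rintro ⟨hxe, p, -, rfl⟩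
      exact (hmemB p).2 (by rw [← hc p]; exact hxe)
    · intro he
      rw [hB, Finset.mem_image] at he
      obtain ⟨p, hp, rfl⟩ := he
      exact ⟨by rw [hc p]; exact (Finset.mem_filter.1 hp).2, p, rfl⟩
  apply Finset.card_bij' (fun x _ => (Finset.univ.filter fun e => x e = true) \ A)
    (fun S _ => fun e => decide (e ∈ S ∪ B))
  · -- i maps into powersetCard
    intro x hx
    rw [Finset.mem_filter] at hx
    obtain ⟨-, hxc, hc⟩ := hx
    rw [Finset.mem_powersetCard]
    constructor
    · exact Finset.sdiff_subset_sdiff (Finset.subset_univ _) le_rfl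
    · have hBsub : B ⊆ Finset.univ.filter fun e => x e = true := by
        have := key x ⟨hxc, hc⟩
        rw [← this]; exact Finset.inter_subset_left
      have : (Finset.univ.filter fun e => x e = true) \ A
          = (Finset.univ.filter fun e => x e = true) \ B := by
        conv_lhs => rw [← Finset.sdiff_inter_self_left (Finset.univ.filter fun e => x e = true) A,
          key x ⟨hxc, hc⟩]
      rw [this, Finset.card_sdiff_of_subset hBsub, hxc, hBcard]
  · -- j maps into the filter set
    intro S hS
    rw [Finset.mem_powersetCard] at hS
    obtain ⟨hS1, hS2⟩ := hS
    have hSA : ∀ e ∈ S, e ∉ A := fun e he => (Finset.mem_sdiff.1 (hS1 he)).2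
    rw [Finset.mem_filter]
    refine ⟨Finset.mem_univ _, ?_, ?_⟩
    · have : (Finset.univ.filter fun e => decide (e ∈ S ∪ B) = true) = S ∪ B := by
        ext e; simp
      rw [this, Finset.card_union_of_disjoint, hS2, hBcard]
      · omega
      · exact Finset.disjoint_left.2 fun e he heB => hSA e he (hBA heB)
    · intro p
      by_cases hp : y p = true
      · rw [hp]
        simp only [decide_eq_true_iff, Finset.mem_union]
        exact Or.inr ((hmemB p).2 hp)
      · rw [Bool.eq_false_iff.2 hp]
        simp only [decide_eq_false_iff_not, Finset.mem_union, not_or]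
        exact ⟨fun hc => hSA _ hc (hmemA p), fun hc => hp ((hmemB p).1 hc)⟩
  · -- left inverse
    intro x hx
    rw [Finset.mem_filter] at hx
    obtain ⟨-, hxc, hc⟩ := hx
    funext e
    by_cases he : x e = true
    · rw [he]
      simp only [decide_eq_true_iff, Finset.mem_union, Finset.mem_sdiff, Finset.mem_filter,
        Finset.mem_univ, true_and]
      by_cases heA : e ∈ A
      · right
        rw [← key x ⟨hxc, hc⟩]
        exact Finset.mem_inter.2 ⟨Finset.mem_filter.2 ⟨Finset.mem_univ _, he⟩, heA⟩
      · exact Or.inl ⟨he, heA⟩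
    · rw [Bool.eq_false_iff.2 he]
      simp only [decide_eq_false_iff_not, Finset.mem_union, Finset.mem_sdiff, Finset.mem_filter,
        Finset.mem_univ, true_and, not_or]
      refine ⟨fun hcs => he hcs.1, fun hcB => ?_⟩
      have : e ∈ (Finset.univ.filter fun e => x e = true) ∩ A := by
        rw [key x ⟨hxc, hc⟩]; exact hcB
      exact he (Finset.mem_filter.1 (Finset.mem_inter.1 this).1).2
  · -- right inverse
    intro S hS
    rw [Finset.mem_powersetCard] at hS
    obtain ⟨hS1, hS2⟩ := hS
    have hSA : ∀ e ∈ S, e ∉ A := fun e he => (Finset.mem_sdiff.1 (hS1 he)).2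
    ext e
    simp only [Finset.mem_sdiff, Finset.mem_filter, Finset.mem_univ, true_and,
      decide_eq_true_iff, Finset.mem_union]
    constructor
    · rintro ⟨he | he, heA⟩
      · exact he
      · exact absurd (hBA he) heA
    · intro he
      exact ⟨Or.inl he, hSA e he⟩


lemma cardQ (h n : ℕ) (E : Type) [Fintype E] [DecidableEq E]
    (hE : Fintype.card E = 2 * h)
    (y : Fin n → Bool) (x : E → Bool)
    (hx : (Finset.univ.filter fun e => x e = true).card = h) :
    Nat.card {q' : Fin n → E // Function.Injective q' ∧ ∀ p, x (q' p) = y p}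
      = h.descFactorial (wt y) * h.descFactorial (n - wt y) := by
  have e : {q' : Fin n → E // Function.Injective q' ∧ ∀ p, x (q' p) = y p}
      ≃ ({p : Fin n // y p = true} ↪ {e : E // x e = true}) ×
        ({p : Fin n // y p = false} ↪ {e : E // x e = false}) := by
    refine ⟨fun q' => (⟨fun p => ⟨q'.1 p.1, by rw [q'.2.2]; exact p.2⟩, ?_⟩,
              ⟨fun p => ⟨q'.1 p.1, by rw [q'.2.2]; exact p.2⟩, ?_⟩),
            fun fg => ⟨fun p => if hp : y p = true then (fg.1 ⟨p, hp⟩).1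
              else (fg.2 ⟨p, Bool.eq_false_iff.2 hp⟩).1, ?_, ?_⟩, ?_, ?_⟩
    · intro a b hab
      exact Subtype.ext (q'.2.1 (congrArg Subtype.val hab))
    · intro a b hab
      exact Subtype.ext (q'.2.1 (congrArg Subtype.val hab))
    · intro a b hab
      dsimp at hab
      by_cases ha : y a = true <;> by_cases hb : y b = true
      · rw [dif_pos ha, dif_pos hb] at hab
        exact congrArg Subtype.val (fg.1.injective (Subtype.ext hab))
      · rw [dif_pos ha, dif_neg hb] at hab
        have h1 := (fg.1 ⟨a, ha⟩).2
        have h2 := (fg.2 ⟨b, Bool.eq_false_iff.2 hb⟩).2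
        rw [hab] at h1; rw [h1] at h2; cases h2
      · rw [dif_neg ha, dif_pos hb] at hab
        have h1 := (fg.2 ⟨a, Bool.eq_false_iff.2 ha⟩).2
        have h2 := (fg.1 ⟨b, hb⟩).2
        rw [hab] at h1; rw [h1] at h2; cases h2
      · rw [dif_neg ha, dif_neg hb] at hab
        exact congrArg Subtype.val (fg.2.injective (Subtype.ext hab))
    · intro p
      dsimp only
      by_cases hp : y p = true
      · rw [dif_pos hp, (fg.1 ⟨p, hp⟩).2, hp]
      · rw [dif_neg hp, (fg.2 ⟨p, Bool.eq_false_iff.2 hp⟩).2]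
        exact (Bool.eq_false_iff.2 hp).symm
    · rintro ⟨q', hq1, hq2⟩
      apply Subtype.ext
      funext p
      dsimp
      split <;> rfl
    · rintro ⟨f, g⟩
      dsimp
      congr 1
      · apply Function.Embedding.ext
        intro p
        apply Subtype.ext
        exact dif_pos p.2
      · apply Function.Embedding.ext
        intro p
        apply Subtype.ext
        exact dif_neg (by simp [p.2])
  rw [Nat.card_congr e, Nat.card_eq_fintype_card, Fintype.card_prod,
    Fintype.card_embedding_eq, Fintype.card_embedding_eq]
  have h1 : Fintype.card {e : E // x e = true} = h := by
    rw [Fintype.card_subtype]; exact hx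
  have h2 : Fintype.card {e : E // x e = false} = h := by
    have e2 : Fintype.card {e : E // x e = false} = Fintype.card {e : E // ¬ x e = true} :=
      Fintype.card_congr (Equiv.subtypeEquivRight fun e => Bool.eq_false_iff)
    rw [e2, Fintype.card_subtype_compl, hE, h1]; omega
  have h3 : Fintype.card {p : Fin n // y p = true} = wt y := by
    rw [Fintype.card_subtype]; rfl
  have h4 : Fintype.card {p : Fin n // y p = false} = n - wt y := by
    have e2 : Fintype.card {p : Fin n // y p = false} = Fintype.card {p : Fin n // ¬ y p = true} :=
      Fintype.card_congr (Equiv.subtypeEquivRight fun p => Bool.eq_false_iff)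
    rw [e2, Fintype.card_subtype_compl, h3, Fintype.card_fin]
  rw [h1, h2, h3, h4]


/-- **Lemma 8 of the paper.** Let `n ≤ 2h`, let `E` have exactly
`2h` elements, let `q : Fin n → E` be injective, and let `y : Fin n → Bool`
have Hamming weight `w` with `n − h ≤ w ≤ h`.  Summing over the balanced
assignments `x : E → Bool` (exactly `h` values `true`) consistent with `q`
(`x ∘ q = y`), one has `Σ_x 1/|Q(x,y)| = C(2h,h) · (2h−n)! / (2h)!`.
Consequently, when Alice picks such an `x` uniformly at random (probability
`1/C(2h,h)` each) and then `q` uniformly in `Q(x,y)`, every injective `n`-tuple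
`q` is announced with the same probability `(2h−n)!/(2h)!`, independently of
`y` — the announced indices leak no information about the INFO string `y`. -/
theorem announced_indices_uniform (h n : ℕ) (hn : n ≤ 2 * h)
    (E : Type) [Fintype E] [DecidableEq E]
    (hE : Fintype.card E = 2 * h) (q : Fin n → E) (hq : Function.Injective q)
    (y : Fin n → Bool) (w : ℕ) (hwdef : w = wt y)
    (hw1 : n - h ≤ w) (hw2 : w ≤ h) :
    (∑ x ∈ Finset.univ.filter (fun x : E → Bool =>
        (Finset.univ.filter fun e => x e = true).card = h ∧ ∀ p, x (q p) = y p),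
        (1 : ℝ) /
          (Nat.card {q' : Fin n → E // Function.Injective q' ∧ ∀ p, x (q' p) = y p})) =
      (((2 * h).choose h : ℕ) : ℝ) * (2 * h - n).factorial / (2 * h).factorial
    ∧
    (∑ x ∈ Finset.univ.filter (fun x : E → Bool =>
        (Finset.univ.filter fun e => x e = true).card = h ∧ ∀ p, x (q p) = y p),
        (1 / (((2 * h).choose h : ℕ) : ℝ)) *
          (1 / (Nat.card {q' : Fin n → E // Function.Injective q' ∧ ∀ p, x (q' p) = y p}))) =
      ((2 * h - n).factorial : ℝ) / (2 * h).factorial := by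

  have hwn : w ≤ n := by
    rw [hwdef, wt]
    exact le_trans (Finset.card_filter_le _ _) (by simp)
  set s := Finset.univ.filter (fun x : E → Bool =>
      (Finset.univ.filter fun e => x e = true).card = h ∧ ∀ p, x (q p) = y p) with hs
  set D : ℕ := h.descFactorial w * h.descFactorial (n - w) with hD
  have hQ : ∀ x ∈ s, (1 : ℝ) /
      (Nat.card {q' : Fin n → E // Function.Injective q' ∧ ∀ p, x (q' p) = y p})
      = 1 / (D : ℝ) := by
    intro x hx
    rw [hs, Finset.mem_filter] at hx
    rw [cardQ h n E hE y x hx.2.1, hD, hwdef]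
  have hcard : s.card = (2 * h - n).choose (h - w) := by
    rw [hs, hwdef]
    exact cardX h n E hE q hq y (hwdef ▸ hw2)
  -- the key natural-number identity
  have a : (2 * h).choose h * (h.factorial * h.factorial) = (2 * h).factorial := by
    have := Nat.choose_mul_factorial_mul_factorial (show h ≤ 2 * h by omega)
    rw [show 2 * h - h = h by omega] at this
    rw [← this]; ring
  have b : h.descFactorial w * (h - w).factorial = h.factorial := by
    rw [mul_comm]; exact Nat.factorial_mul_descFactorial hw2
  have c : h.descFactorial (n - w) * (h - (n - w)).factorial = h.factorial := by
    rw [mul_comm]; exact Nat.factorial_mul_descFactorial (by omega)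
  have d : (2 * h - n).choose (h - w) * ((h - w).factorial * (h - (n - w)).factorial)
      = (2 * h - n).factorial := by
    have := Nat.choose_mul_factorial_mul_factorial (show h - w ≤ 2 * h - n by omega)
    rw [show 2 * h - n - (h - w) = h - (n - w) by omega] at this
    rw [← this]; ring
  have hh : h.factorial * h.factorial
      = (h.descFactorial w * h.descFactorial (n - w))
        * ((h - w).factorial * (h - (n - w)).factorial) := by
    nth_rw 1 [← b]; rw [← c]; ring
  have main : (2 * h - n).choose (h - w) * (2 * h).factorial
      = (2 * h).choose h * (2 * h - n).factorial * D := by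
    rw [← a, hh, ← d, hD]; ring
  have hDpos : 0 < D := by
    rw [hD]
    apply Nat.mul_pos <;>
      · exact Nat.pos_of_ne_zero fun hz => by
          rw [Nat.descFactorial_eq_zero_iff_lt] at hz; omega
  have hDne : (D : ℝ) ≠ 0 := Nat.cast_ne_zero.2 hDpos.ne'
  have hFne : ((2 * h).factorial : ℝ) ≠ 0 := Nat.cast_ne_zero.2 (Nat.factorial_ne_zero _)
  have first : (∑ x ∈ s, (1 : ℝ) /
      (Nat.card {q' : Fin n → E // Function.Injective q' ∧ ∀ p, x (q' p) = y p})) =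
      (((2 * h).choose h : ℕ) : ℝ) * (2 * h - n).factorial / (2 * h).factorial := by
    rw [Finset.sum_congr rfl hQ, Finset.sum_const, hcard, nsmul_eq_mul, mul_one_div,
      div_eq_div_iff hDne hFne]
    exact_mod_cast main
  refine ⟨first, ?_⟩
  have hCne : (((2 * h).choose h : ℕ) : ℝ) ≠ 0 :=
    Nat.cast_ne_zero.2 (Nat.choose_pos (by omega)).ne'
  calc (∑ x ∈ s, (1 / (((2 * h).choose h : ℕ) : ℝ)) *
          (1 / (Nat.card {q' : Fin n → E // Function.Injective q' ∧ ∀ p, x (q' p) = y p})))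
      = (1 / (((2 * h).choose h : ℕ) : ℝ)) * ∑ x ∈ s, (1 : ℝ) /
          (Nat.card {q' : Fin n → E // Function.Injective q' ∧ ∀ p, x (q' p) = y p}) := by
        rw [Finset.mul_sum]
    _ = (1 / (((2 * h).choose h : ℕ) : ℝ)) *
          ((((2 * h).choose h : ℕ) : ℝ) * (2 * h - n).factorial / (2 * h).factorial) := by
        rw [first]
    _ = ((2 * h - n).factorial : ℝ) / (2 * h).factorial := by
        field_simp
end

section
/- Let N be a natural number, let E ⊆ F be finite sets of indices in Fin N, and let w : (Fin N → Bool) → ℝ be a function such that w i = w i' whenever the restrictions of i and i' to F have equal Hamming weight (equal number of positions k ∈ F with value true). Then for any two assignments x, x' : E → Bool with equal Hamming weight on E, Σ over bitstrings i with i k = x k for all k ∈ E, of w i, equals Σ over bitstrings i with i k = x' k for all k ∈ E, of w i. -/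
/-- **Lemma 7 of the paper.** Let `E ⊆ F` be finite sets of
indices in `Fin N` and let `w` be a weight function on bitstrings that depends
only on the Hamming weight of the restriction to `F`.  Then for any two
assignments `x, x' : E → Bool` with equal Hamming weight on `E`, the total
weight of the bitstrings extending `x` equals the total weight of the
bitstrings extending `x'`. -/
theorem balanced_assignments_equally_likely (N : ℕ) (E F : Finset (Fin N))
    (hEF : E ⊆ F) (w : (Fin N → Bool) → ℝ)
    (hw : ∀ i i' : Fin N → Bool,
      (F.filter fun k => i k = true).card = (F.filter fun k => i' k = true).card →
      w i = w i')
    (x x' : E → Bool)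
    (hxx' : (Finset.univ.filter fun e : E => x e = true).card =
            (Finset.univ.filter fun e : E => x' e = true).card) :
    ∑ i ∈ Finset.univ.filter
        (fun i : Fin N → Bool => ∀ k (hk : k ∈ E), i k = x ⟨k, hk⟩), w i =
    ∑ i ∈ Finset.univ.filter
        (fun i : Fin N → Bool => ∀ k (hk : k ∈ E), i k = x' ⟨k, hk⟩), w i := by
  classical
  -- equiv between true-sets and between false-sets
  have hpos : Fintype.card {e : E // x e = true} = Fintype.card {e : E // x' e = true} := by
    simpa [Fintype.card_subtype] using hxx'
  have hneg : Fintype.card {e : E // ¬ x e = true} =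
      Fintype.card {e : E // ¬ x' e = true} := by
    have h1 := Fintype.card_subtype_compl (fun e : E => x e = true)
    have h2 := Fintype.card_subtype_compl (fun e : E => x' e = true)
    rw [h1, h2, hpos]
  let σ₁ : {e : E // x e = true} ≃ {e : E // x' e = true} := Fintype.equivOfCardEq hpos
  let σ₂ : {e : E // ¬ x e = true} ≃ {e : E // ¬ x' e = true} := Fintype.equivOfCardEq hneg
  let σ : Equiv.Perm E :=
    (Equiv.sumCompl (fun e : E => x e = true)).symm.trans
      ((σ₁.sumCongr σ₂).trans (Equiv.sumCompl fun e : E => x' e = true))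
  have hσ : ∀ e : E, x' (σ e) = x e := by
    intro e
    by_cases h : x e = true
    · have : σ e = (σ₁ ⟨e, h⟩ : E) := by
        show (Equiv.sumCompl fun e : E => x' e = true)
          (Sum.map σ₁ σ₂ ((Equiv.sumCompl fun e : E => x e = true).symm e)) = _
        rw [Equiv.sumCompl_symm_apply_of_pos (p := fun e : E => x e = true) (a := e) h]; rfl
      rw [this, (σ₁ ⟨e, h⟩).2, h]
    · have : σ e = (σ₂ ⟨e, h⟩ : E) := by
        show (Equiv.sumCompl fun e : E => x' e = true)
          (Sum.map σ₁ σ₂ ((Equiv.sumCompl fun e : E => x e = true).symm e)) = _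
        rw [Equiv.sumCompl_symm_apply_of_neg (p := fun e : E => x e = true) (a := e) h]; rfl
      rw [this]
      have h2 := (σ₂ ⟨e, h⟩).2
      simp only [Bool.not_eq_true] at h h2
      rw [h, h2]
  -- extend to a permutation of Fin N fixing the complement of E
  let τ : Equiv.Perm (Fin N) :=
    Equiv.Perm.subtypeCongr (p := fun k => k ∈ E) σ (Equiv.refl _)
  have hτ_in : ∀ k (hk : k ∈ E), τ k = (σ ⟨k, hk⟩ : E) := by
    intro k hk
    exact Equiv.Perm.subtypeCongr.left_apply σ (Equiv.refl _) hk
  have hτ_out : ∀ k, k ∉ E → τ k = k := by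
    intro k hk
    exact Equiv.Perm.subtypeCongr.right_apply σ (Equiv.refl _) hk
  have hτE : ∀ k, τ k ∈ E ↔ k ∈ E := by
    intro k
    by_cases hk : k ∈ E
    · rw [hτ_in k hk]; simpa using hk
    · rw [hτ_out k hk]
  have hτF : ∀ k, τ k ∈ F ↔ k ∈ F := by
    intro k
    by_cases hk : k ∈ E
    · constructor <;> intro _
      · exact hEF hk
      · rw [hτ_in k hk]; exact hEF (σ ⟨k, hk⟩).2
    · rw [hτ_out k hk]
  have hτsymmF : ∀ k, τ.symm k ∈ F ↔ k ∈ F := by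
    intro k
    have := hτF (τ.symm k)
    simpa using this.symm
  -- permutations preserving F preserve the Hamming weight on F
  have hcard : ∀ (π : Equiv.Perm (Fin N)), (∀ k, π k ∈ F ↔ k ∈ F) →
      ∀ i : Fin N → Bool,
        (F.filter fun k => i (π k) = true).card = (F.filter fun k => i k = true).card := by
    intro π hπ i
    apply Finset.card_bij (fun a _ => π a)
    · intro a ha
      simp only [Finset.mem_filter] at ha ⊢
      exact ⟨(hπ a).2 ha.1, ha.2⟩
    · intro a _ b _ h
      exact π.injective h
    · intro b hb
      simp only [Finset.mem_filter] at hb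
      refine ⟨π.symm b, ?_, by simp⟩
      simp only [Finset.mem_filter, Equiv.apply_symm_apply]
      refine ⟨?_, by simpa using hb.2⟩
      have := hπ (π.symm b)
      simp only [Equiv.apply_symm_apply] at this
      exact this.symm.2 hb.1
  -- transport the sum along i ↦ i ∘ τ.symm
  refine Finset.sum_nbij' (fun a => a ∘ τ.symm) (fun a => a ∘ τ) ?_ ?_ ?_ ?_ ?_
  · intro a ha
    simp only [Finset.mem_filter, Finset.mem_univ, true_and] at ha ⊢
    intro k hk
    have hk' : τ.symm k ∈ E := by
      have h2 := hτE (τ.symm k)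
      rw [Equiv.apply_symm_apply] at h2
      exact h2.1 hk
    have := ha (τ.symm k) hk'
    simp only [Function.comp_apply]
    rw [this]
    have := hσ ⟨τ.symm k, hk'⟩
    rw [← this]
    congr 1
    ext
    rw [← hτ_in (τ.symm k) hk']
    simp
  · intro a ha
    simp only [Finset.mem_filter, Finset.mem_univ, true_and] at ha ⊢
    intro k hk
    have hk' : τ k ∈ E := (hτE k).2 hk
    have := ha (τ k) hk'
    simp only [Function.comp_apply]
    rw [this]
    have h2 : (⟨τ k, hk'⟩ : E) = σ ⟨k, hk⟩ := by
      exact Subtype.ext (hτ_in k hk)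
    rw [h2, hσ]
  · intro a _; ext k; simp
  · intro a _; ext k; simp
  · intro a _
    exact hw _ _ (hcard τ.symm hτsymmF a).symm
end
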